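/- arXiv:1608.08474 — 5 statements merged into one kernel-verified Lean document; each statement's English description precedes it below -/
import Mathlib

section
/- Let 𝒳 and 𝒴 be finite nonempty sets, let q be a pmf on 𝒳 × 𝒴, let k, N ≥ 1, and let p̃ be any pmf on ((𝒳 × 𝒴)^N)^k with block marginals p̃₁, …, p̃_k on (𝒳 × 𝒴)^N. Let T_{all} denote the joint histogram of all kN pairs. Then for every ε > 0, P_{p̃}[ V( q, T_{all} ) > ε ] ≤ ∑_{i=1}^{k} [ V( p̃_i, q^{⊗N} ) + 2 |𝒳| |𝒴| exp( − N ε² / (2 |𝒳|² |𝒴|²) ) ]. Note that the k blocks need not be independent under p̃. (Abstract form of Lemma 8 of the paper, combining the histogram convexity bound with a union bound.) -/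
open scoped ENNReal BigOperators

attribute [local instance] Classical.propDecidable

/-- A probability mass function on a finite set. -/
def IsPMF {α : Type*} [Fintype α] (p : α → ℝ) : Prop :=
  (∀ x, 0 ≤ p x) ∧ ∑ x, p x = 1

/-- Variational distance between two pmfs. -/
noncomputable def varDist {α : Type*} [Fintype α] (p q : α → ℝ) : ℝ :=
  ∑ x, |p x - q x|

/-- Joint histogram (empirical distribution) of `N` samples. -/
noncomputable def empDist {α : Type*} [Fintype α] [DecidableEq α] {N : ℕ}
    (ω : Fin N → α) : α → ℝ :=
  fun a => (N : ℝ)⁻¹ * ∑ j, (if ω j = a then (1 : ℝ) else 0)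

/-- Joint histogram (empirical distribution) of `kN` samples arranged in `k`
blocks of `N`. -/
noncomputable def empDistBlocks {α : Type*} [Fintype α] [DecidableEq α] {k N : ℕ}
    (ω : Fin k → Fin N → α) : α → ℝ :=
  fun a => ((k * N : ℕ) : ℝ)⁻¹ * ∑ j : Fin k, ∑ i : Fin N, (if ω j i = a then (1 : ℝ) else 0)

/-- Pushforward (marginal) of a pmf along a map. -/
noncomputable def pushforward {Ω β : Type*} [Fintype Ω] [DecidableEq β]
    (p : Ω → ℝ) (f : Ω → β) : β → ℝ :=
  fun b => ∑ ω, if f ω = b then p ω else 0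

lemma aux_mgf {α : Type*} [Fintype α] (q : α → ℝ) (hq0 : ∀ x, 0 ≤ q x)
    (hq1 : ∑ x, q x = 1) (Y : α → ℝ) (hY : ∀ x, |Y x| ≤ 1)
    (hmean : ∑ x, q x * Y x = 0) (t : ℝ) :
    ∑ x, q x * Real.exp (t * Y x) ≤ Real.exp (t ^ 2 / 2) := by
  have key : ∀ x, Real.exp (t * Y x) ≤ Real.cosh t + Y x * Real.sinh t := by
    intro x
    have h1 : -1 ≤ Y x := (abs_le.1 (hY x)).1
    have h2 : Y x ≤ 1 := (abs_le.1 (hY x)).2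
    have ha : (0:ℝ) ≤ (1 + Y x)/2 := by linarith
    have hb : (0:ℝ) ≤ (1 - Y x)/2 := by linarith
    have hab : (1 + Y x)/2 + (1 - Y x)/2 = 1 := by ring
    have hcv := convexOn_exp.2 (Set.mem_univ t) (Set.mem_univ (-t)) ha hb hab
    simp only [smul_eq_mul] at hcv
    have heq : (1 + Y x)/2 * t + (1 - Y x)/2 * -t = t * Y x := by ring
    rw [heq] at hcv
    calc Real.exp (t * Y x) ≤ (1 + Y x)/2 * Real.exp t + (1 - Y x)/2 * Real.exp (-t) := hcv
      _ = Real.cosh t + Y x * Real.sinh t := by rw [Real.cosh_eq, Real.sinh_eq]; ring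
  calc ∑ x, q x * Real.exp (t * Y x)
      ≤ ∑ x, q x * (Real.cosh t + Y x * Real.sinh t) :=
        Finset.sum_le_sum fun x _ => mul_le_mul_of_nonneg_left (key x) (hq0 x)
    _ = (∑ x, q x) * Real.cosh t + (∑ x, q x * Y x) * Real.sinh t := by
        rw [Finset.sum_mul, Finset.sum_mul, ← Finset.sum_add_distrib]
        exact Finset.sum_congr rfl fun x _ => by ring
    _ = Real.cosh t := by rw [hq1, hmean]; ring
    _ ≤ Real.exp (t ^ 2 / 2) := Real.cosh_le_exp_half_sq t

lemma aux_chernoff {α : Type*} [Fintype α] (q : α → ℝ) (hq0 : ∀ x, 0 ≤ q x)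
    (hq1 : ∑ x, q x = 1) (Y : α → ℝ) (hY : ∀ x, |Y x| ≤ 1)
    (hmean : ∑ x, q x * Y x = 0) {N : ℕ} (δ : ℝ) (hδ : 0 ≤ δ) :
    ∑ w : Fin N → α, (if (N : ℝ) * δ ≤ ∑ j, Y (w j) then ∏ j, q (w j) else 0)
      ≤ Real.exp (-(N * δ ^ 2) / 2) := by
  have step1 : ∀ w : Fin N → α,
      (if (N : ℝ) * δ ≤ ∑ j, Y (w j) then ∏ j, q (w j) else 0)
        ≤ Real.exp (-((N : ℝ) * δ ^ 2)) * ∏ j, (q (w j) * Real.exp (δ * Y (w j))) := by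
    intro w
    have hprod : ∏ j, (q (w j) * Real.exp (δ * Y (w j)))
        = (∏ j, q (w j)) * Real.exp (δ * ∑ j, Y (w j)) := by
      rw [Finset.prod_mul_distrib, Finset.mul_sum, Real.exp_sum]
    rw [hprod]
    split_ifs with h
    · have hq : 0 ≤ ∏ j, q (w j) := Finset.prod_nonneg fun j _ => hq0 (w j)
      have hexp : (1:ℝ) ≤ Real.exp (-((N : ℝ) * δ ^ 2)) * Real.exp (δ * ∑ j, Y (w j)) := by
        rw [← Real.exp_add]
        refine Real.one_le_exp ?_
        have : (N : ℝ) * δ * δ ≤ (∑ j, Y (w j)) * δ := mul_le_mul_of_nonneg_right h hδ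
        nlinarith
      calc (∏ j, q (w j)) = (∏ j, q (w j)) * 1 := by ring
        _ ≤ (∏ j, q (w j)) * (Real.exp (-((N : ℝ) * δ ^ 2)) * Real.exp (δ * ∑ j, Y (w j))) :=
            mul_le_mul_of_nonneg_left hexp hq
        _ = Real.exp (-((N : ℝ) * δ ^ 2)) * ((∏ j, q (w j)) * Real.exp (δ * ∑ j, Y (w j))) := by ring
    · exact mul_nonneg (Real.exp_nonneg _) (mul_nonneg (Finset.prod_nonneg fun j _ => hq0 (w j)) (Real.exp_nonneg _))
  calc ∑ w : Fin N → α, (if (N : ℝ) * δ ≤ ∑ j, Y (w j) then ∏ j, q (w j) else 0)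
      ≤ ∑ w : Fin N → α, Real.exp (-((N : ℝ) * δ ^ 2)) * ∏ j, (q (w j) * Real.exp (δ * Y (w j))) :=
        Finset.sum_le_sum fun w _ => step1 w
    _ = Real.exp (-((N : ℝ) * δ ^ 2)) * (∑ x, q x * Real.exp (δ * Y x)) ^ N := by
        rw [← Finset.mul_sum, Fintype.sum_pow]
    _ ≤ Real.exp (-((N : ℝ) * δ ^ 2)) * (Real.exp (δ ^ 2 / 2)) ^ N := by
        refine mul_le_mul_of_nonneg_left ?_ (Real.exp_nonneg _)
        refine pow_le_pow_left₀ ?_ (aux_mgf q hq0 hq1 Y hY hmean δ) N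
        exact Finset.sum_nonneg fun x _ => mul_nonneg (hq0 x) (Real.exp_nonneg _)
    _ = Real.exp (-(N * δ ^ 2) / 2) := by
        rw [← Real.exp_nat_mul, ← Real.exp_add]
        ring_nf

lemma aux_hoeffding_two {α : Type*} [Fintype α] [DecidableEq α] (q : α → ℝ)
    (hq : IsPMF q) (a : α) {N : ℕ} (hN : 1 ≤ N) (δ : ℝ) (hδ : 0 < δ) :
    ∑ w : Fin N → α, (if δ < |empDist w a - q a| then ∏ j, q (w j) else 0)
      ≤ 2 * Real.exp (-(N * δ ^ 2) / 2) := by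
  set Y : α → ℝ := fun x => (if x = a then 1 else 0) - q a with hYdef
  have hqa0 : 0 ≤ q a := hq.1 a
  have hqa1 : q a ≤ 1 := by
    rw [← hq.2]
    exact Finset.single_le_sum (fun x _ => hq.1 x) (Finset.mem_univ a)
  have hY : ∀ x, |Y x| ≤ 1 := by
    intro x
    have hx : Y x = (if x = a then 1 else 0) - q a := rfl
    rw [abs_le, hx]
    constructor <;> (split_ifs <;> simp <;> linarith)
  have hYn : ∀ x, |(-Y) x| ≤ 1 := fun x => by rw [Pi.neg_apply, abs_neg]; exact hY x
  have hmean : ∑ x, q x * Y x = 0 := by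
    simp only [hYdef, mul_sub]
    rw [Finset.sum_sub_distrib]
    have h1 : ∑ x, q x * (if x = a then (1:ℝ) else 0) = q a := by
      rw [Finset.sum_congr rfl (fun x _ => by rw [mul_ite, mul_one, mul_zero])]
      simpa using Finset.sum_ite_eq' Finset.univ a q
    have h2 : ∑ x, q x * q a = q a := by rw [← Finset.sum_mul, hq.2, one_mul]
    rw [h1, h2, sub_self]
  have hmeann : ∑ x, q x * (-Y) x = 0 := by
    simp only [Pi.neg_apply, mul_neg]
    rw [Finset.sum_neg_distrib, hmean, neg_zero]
  have hNpos : (0:ℝ) < N := by exact_mod_cast hN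
  have hkey : ∀ w : Fin N → α, δ < |empDist w a - q a| →
      ((N : ℝ) * δ ≤ ∑ j, Y (w j)) ∨ ((N : ℝ) * δ ≤ ∑ j, (-Y) (w j)) := by
    intro w hw
    have hsum : ∑ j, Y (w j) = (∑ j, (if w j = a then (1:ℝ) else 0)) - N * q a := by
      simp only [hYdef]
      rw [Finset.sum_sub_distrib, Finset.sum_const, Finset.card_univ, Fintype.card_fin,
        nsmul_eq_mul]
    have hemp : empDist w a - q a = (N : ℝ)⁻¹ * ∑ j, Y (w j) := by
      rw [hsum, empDist]
      field_simp
    rw [hemp] at hw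
    have habs : (N : ℝ) * δ < |∑ j, Y (w j)| := by
      have h2 : (N : ℝ) * δ < (N : ℝ) * |(N : ℝ)⁻¹ * ∑ j, Y (w j)| :=
        (mul_lt_mul_iff_right₀ hNpos).2 hw
      rwa [abs_mul, abs_inv, abs_of_pos hNpos, ← mul_assoc,
        mul_inv_cancel₀ (ne_of_gt hNpos), one_mul] at h2
    rcases le_or_gt 0 (∑ j, Y (w j)) with hpos | hneg
    · left
      rw [abs_of_nonneg hpos] at habs
      exact habs.le
    · right
      rw [abs_of_neg hneg] at habs
      have hns : ∑ j, (-Y) (w j) = -∑ j, Y (w j) := by simp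
      rw [hns]
      exact habs.le
  have hsplit : ∀ w : Fin N → α,
      (if δ < |empDist w a - q a| then ∏ j, q (w j) else 0)
        ≤ (if (N : ℝ) * δ ≤ ∑ j, Y (w j) then ∏ j, q (w j) else 0)
          + (if (N : ℝ) * δ ≤ ∑ j, (-Y) (w j) then ∏ j, q (w j) else 0) := by
    intro w
    have hq0' : 0 ≤ ∏ j, q (w j) := Finset.prod_nonneg fun j _ => hq.1 (w j)
    have hz1 : (0:ℝ) ≤ (if (N : ℝ) * δ ≤ ∑ j, Y (w j) then ∏ j, q (w j) else 0) := by
      split_ifs; exacts [hq0', le_refl 0]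
    have hz2 : (0:ℝ) ≤ (if (N : ℝ) * δ ≤ ∑ j, (-Y) (w j) then ∏ j, q (w j) else 0) := by
      split_ifs; exacts [hq0', le_refl 0]
    by_cases h : δ < |empDist w a - q a|
    · rcases hkey w h with h' | h'
      · rw [if_pos h, if_pos h']
        linarith
      · rw [if_pos h, if_pos h']
        linarith
    · rw [if_neg h]
      linarith
  calc ∑ w : Fin N → α, (if δ < |empDist w a - q a| then ∏ j, q (w j) else 0)
      ≤ ∑ w : Fin N → α, ((if (N : ℝ) * δ ≤ ∑ j, Y (w j) then ∏ j, q (w j) else 0)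
          + (if (N : ℝ) * δ ≤ ∑ j, (-Y) (w j) then ∏ j, q (w j) else 0)) :=
        Finset.sum_le_sum fun w _ => hsplit w
    _ = (∑ w : Fin N → α, (if (N : ℝ) * δ ≤ ∑ j, Y (w j) then ∏ j, q (w j) else 0))
          + ∑ w : Fin N → α, (if (N : ℝ) * δ ≤ ∑ j, (-Y) (w j) then ∏ j, q (w j) else 0) :=
        Finset.sum_add_distrib
    _ ≤ Real.exp (-(N * δ ^ 2) / 2) + Real.exp (-(N * δ ^ 2) / 2) := by
        gcongr
        · exact aux_chernoff q hq.1 hq.2 Y hY hmean δ hδ.le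
        · exact aux_chernoff q hq.1 hq.2 (-Y) hYn hmeann δ hδ.le
    _ = 2 * Real.exp (-(N * δ ^ 2) / 2) := by ring

lemma aux_conc {α : Type*} [Fintype α] [DecidableEq α] [Nonempty α] (q : α → ℝ)
    (hq : IsPMF q) {N : ℕ} (hN : 1 ≤ N) (ε : ℝ) (hε : 0 < ε) :
    ∑ w : Fin N → α, (if ε < varDist q (empDist w) then ∏ j, q (w j) else 0)
      ≤ 2 * (Fintype.card α : ℝ) *
          Real.exp (-(N * (ε / (Fintype.card α : ℝ)) ^ 2) / 2) := by
  have hM : (0:ℝ) < (Fintype.card α : ℝ) := by exact_mod_cast Fintype.card_pos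
  set M : ℝ := (Fintype.card α : ℝ) with hMdef
  set δ : ℝ := ε / M with hδdef
  have hδ : 0 < δ := div_pos hε hM
  have hpt : ∀ w : Fin N → α,
      (if ε < varDist q (empDist w) then ∏ j, q (w j) else 0)
        ≤ ∑ a, (if δ < |empDist w a - q a| then ∏ j, q (w j) else 0) := by
    intro w
    have hz : ∀ a ∈ Finset.univ,
        (0:ℝ) ≤ (if δ < |empDist w a - q a| then ∏ j, q (w j) else 0) := by
      intro a _
      split_ifs
      exacts [Finset.prod_nonneg fun j _ => hq.1 (w j), le_refl 0]
    by_cases h : ε < varDist q (empDist w)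
    · have hex : ∃ a, δ < |empDist w a - q a| := by
        by_contra hc
        push_neg at hc
        have hb : varDist q (empDist w) ≤ ε := by
          have h1 : varDist q (empDist w) ≤ ∑ _a : α, δ := by
            refine Finset.sum_le_sum fun a _ => ?_
            rw [abs_sub_comm]
            exact hc a
          have h2 : ∑ _a : α, δ = M * δ := by
            rw [Finset.sum_const, Finset.card_univ, nsmul_eq_mul, hMdef]
          have h3 : M * δ = ε := by
            rw [hδdef]
            field_simp
          linarith
        linarith
      obtain ⟨a₀, ha₀⟩ := hex
      rw [if_pos h]
      calc ∏ j, q (w j)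
          = (if δ < |empDist w a₀ - q a₀| then ∏ j, q (w j) else 0) := (if_pos ha₀).symm
        _ ≤ ∑ a, (if δ < |empDist w a - q a| then ∏ j, q (w j) else 0) :=
            Finset.single_le_sum hz (Finset.mem_univ a₀)
    · rw [if_neg h]
      exact Finset.sum_nonneg hz
  calc ∑ w : Fin N → α, (if ε < varDist q (empDist w) then ∏ j, q (w j) else 0)
      ≤ ∑ w : Fin N → α, ∑ a, (if δ < |empDist w a - q a| then ∏ j, q (w j) else 0) :=
        Finset.sum_le_sum fun w _ => hpt w
    _ = ∑ a, ∑ w : Fin N → α, (if δ < |empDist w a - q a| then ∏ j, q (w j) else 0) :=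
        Finset.sum_comm
    _ ≤ ∑ _a : α, 2 * Real.exp (-(N * δ ^ 2) / 2) :=
        Finset.sum_le_sum fun a _ => aux_hoeffding_two q hq a hN δ hδ
    _ = 2 * M * Real.exp (-(N * δ ^ 2) / 2) := by
        rw [Finset.sum_const, Finset.card_univ, nsmul_eq_mul, hMdef]
        ring

lemma aux_block_decomp {α : Type*} [Fintype α] [DecidableEq α] {k N : ℕ}
    (ω : Fin k → Fin N → α) (a : α) :
    empDistBlocks ω a = (k : ℝ)⁻¹ * ∑ i, empDist (ω i) a := by
  unfold empDistBlocks empDist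
  simp only [Nat.cast_mul, mul_inv, Finset.mul_sum]
  exact Finset.sum_congr rfl fun i _ => Finset.sum_congr rfl fun j _ => by ring

lemma aux_blocks {α : Type*} [Fintype α] [DecidableEq α] {k N : ℕ} (hk : 1 ≤ k)
    (q : α → ℝ) (ω : Fin k → Fin N → α) (ε : ℝ)
    (h : ε < varDist q (empDistBlocks ω)) :
    ∃ i, ε < varDist q (empDist (ω i)) := by
  by_contra hc
  push_neg at hc
  have hkpos : (0:ℝ) < (k : ℝ) := by exact_mod_cast hk
  have h1 : ∀ a, |q a - empDistBlocks ω a| ≤ (k:ℝ)⁻¹ * ∑ i, |q a - empDist (ω i) a| := by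
    intro a
    rw [aux_block_decomp ω a]
    have heq : q a - (k:ℝ)⁻¹ * ∑ i, empDist (ω i) a
        = (k:ℝ)⁻¹ * ∑ i, (q a - empDist (ω i) a) := by
      rw [Finset.sum_sub_distrib, Finset.sum_const, Finset.card_univ, Fintype.card_fin,
        nsmul_eq_mul, mul_sub, ← mul_assoc, inv_mul_cancel₀ (ne_of_gt hkpos), one_mul]
    rw [heq, abs_mul, abs_inv, abs_of_pos hkpos]
    exact mul_le_mul_of_nonneg_left (Finset.abs_sum_le_sum_abs _ _) (inv_nonneg.2 hkpos.le)
  have hb : varDist q (empDistBlocks ω) ≤ ε := by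
    calc varDist q (empDistBlocks ω)
        ≤ ∑ a, (k:ℝ)⁻¹ * ∑ i, |q a - empDist (ω i) a| :=
          Finset.sum_le_sum fun a _ => h1 a
      _ = (k:ℝ)⁻¹ * ∑ i, varDist q (empDist (ω i)) := by
          rw [← Finset.mul_sum, Finset.sum_comm]
          rfl
      _ ≤ (k:ℝ)⁻¹ * ((k:ℝ) * ε) := by
          refine mul_le_mul_of_nonneg_left ?_ (inv_nonneg.2 hkpos.le)
          calc ∑ i, varDist q (empDist (ω i)) ≤ ∑ _i : Fin k, ε :=
                Finset.sum_le_sum fun i _ => hc i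
            _ = (k:ℝ) * ε := by
                rw [Finset.sum_const, Finset.card_univ, Fintype.card_fin, nsmul_eq_mul]
      _ = ε := by
          rw [← mul_assoc, inv_mul_cancel₀ (ne_of_gt hkpos), one_mul]
  linarith

lemma aux_marg {Ω β : Type*} [Fintype Ω] [Fintype β] [DecidableEq β]
    (p : Ω → ℝ) (f : Ω → β) (P : β → Prop) :
    ∑ ω, (if P (f ω) then p ω else 0) = ∑ b, (if P b then pushforward p f b else 0) := by
  unfold pushforward
  have h1 : ∀ b, (if P b then (∑ ω, if f ω = b then p ω else 0) else 0)
      = ∑ ω, (if f ω = b then (if P b then p ω else 0) else 0) := by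
    intro b
    split_ifs with h
    · exact Finset.sum_congr rfl fun ω _ => by simp [h]
    · rw [Finset.sum_congr rfl fun ω _ => ?_, Finset.sum_const_zero]
      split_ifs <;> simp [h]
  rw [Finset.sum_congr rfl fun b _ => h1 b, Finset.sum_comm]
  refine Finset.sum_congr rfl fun ω _ => ?_
  rw [Finset.sum_ite_eq Finset.univ (f ω) (fun b => if P b then p ω else 0),
    if_pos (Finset.mem_univ _)]

lemma aux_com {β : Type*} [Fintype β] (p r : β → ℝ) (P : β → Prop) :
    ∑ b, (if P b then p b else 0) ≤ varDist p r + ∑ b, (if P b then r b else 0) := by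
  unfold varDist
  rw [← Finset.sum_add_distrib]
  refine Finset.sum_le_sum fun b _ => ?_
  split_ifs with h
  · have h1 := le_abs_self (p b - r b)
    linarith
  · have := abs_nonneg (p b - r b)
    linarith

lemma aux_conc' {α : Type*} [Fintype α] [DecidableEq α] [Nonempty α] (q : α → ℝ)
    (hq : IsPMF q) {N : ℕ} (hN : 1 ≤ N) (ε : ℝ) (hε : 0 < ε) :
    ∑ w : Fin N → α, (if ε < varDist q (empDist w) then (fun w => ∏ j, q (w j)) w else 0)
      ≤ 2 * (Fintype.card α : ℝ) *
          Real.exp (-(N * (ε / (Fintype.card α : ℝ)) ^ 2) / 2) := by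
  simpa using aux_conc q hq hN ε hε


/-- Abstract form of Lemma 8: for any pmf `p̃` on `((𝒳 × 𝒴)^N)^k` whose blocks
need not be independent, with block marginals `p̃ᵢ`,
`P_{p̃}[ V(q, T_all) > ε ] ≤ ∑ᵢ [ V(p̃ᵢ, q^{⊗N}) + 2|𝒳||𝒴| exp(−Nε²/(2|𝒳|²|𝒴|²)) ]`. -/
theorem empirical_coordination_all_blocks
    {𝒳 𝒴 : Type*} [Fintype 𝒳] [Fintype 𝒴] [Nonempty 𝒳] [Nonempty 𝒴]
    [DecidableEq 𝒳] [DecidableEq 𝒴] {k N : ℕ} (hk : 1 ≤ k) (hN : 1 ≤ N)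
    (q : 𝒳 × 𝒴 → ℝ) (hq : IsPMF q)
    (ptilde : (Fin k → Fin N → 𝒳 × 𝒴) → ℝ) (hptilde : IsPMF ptilde)
    (ε : ℝ) (hε : 0 < ε) :
    (∑ ω : Fin k → Fin N → 𝒳 × 𝒴,
        if ε < varDist q (empDistBlocks ω) then ptilde ω else 0) ≤
      ∑ i : Fin k,
        (varDist (pushforward ptilde (fun ω => ω i)) (fun w => ∏ j, q (w j)) +
          2 * (Fintype.card 𝒳 : ℝ) * (Fintype.card 𝒴 : ℝ) *
            Real.exp (-(N * ε ^ 2) /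
              (2 * (Fintype.card 𝒳 : ℝ) ^ 2 * (Fintype.card 𝒴 : ℝ) ^ 2))) := by
  have hstep1 : (∑ ω : Fin k → Fin N → 𝒳 × 𝒴,
      if ε < varDist q (empDistBlocks ω) then ptilde ω else 0)
      ≤ ∑ i : Fin k, ∑ ω : Fin k → Fin N → 𝒳 × 𝒴,
          (if ε < varDist q (empDist (ω i)) then ptilde ω else 0) := by
    rw [Finset.sum_comm]
    refine Finset.sum_le_sum fun ω _ => ?_
    have hz : ∀ i ∈ Finset.univ,
        (0:ℝ) ≤ (if ε < varDist q (empDist (ω i)) then ptilde ω else 0) := by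
      intro i _
      split_ifs
      exacts [hptilde.1 ω, le_refl 0]
    by_cases h : ε < varDist q (empDistBlocks ω)
    · obtain ⟨i₀, hi₀⟩ := aux_blocks hk q ω ε h
      rw [if_pos h]
      calc ptilde ω
          = (if ε < varDist q (empDist (ω i₀)) then ptilde ω else 0) := (if_pos hi₀).symm
        _ ≤ _ := Finset.single_le_sum hz (Finset.mem_univ i₀)
    · rw [if_neg h]
      exact Finset.sum_nonneg hz
  refine le_trans hstep1 (Finset.sum_le_sum fun i _ => ?_)
  rw [aux_marg ptilde (fun ω => ω i) (fun w => ε < varDist q (empDist w))]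
  refine le_trans (aux_com (pushforward ptilde (fun ω => ω i)) (fun w => ∏ j, q (w j))
    (fun w => ε < varDist q (empDist w))) ?_
  refine add_le_add_right ?_ _
  refine le_trans (aux_conc' q hq hN ε hε) ?_
  apply le_of_eq
  have hX : (0:ℝ) < (Fintype.card 𝒳 : ℝ) := by exact_mod_cast Fintype.card_pos
  have hY : (0:ℝ) < (Fintype.card 𝒴 : ℝ) := by exact_mod_cast Fintype.card_pos
  have hcard : ((Fintype.card (𝒳 × 𝒴) : ℕ) : ℝ)
      = (Fintype.card 𝒳 : ℝ) * (Fintype.card 𝒴 : ℝ) := by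
    rw [Fintype.card_prod]
    push_cast
    ring
  have harg : -(N * (ε / ((Fintype.card 𝒳 : ℝ) * (Fintype.card 𝒴 : ℝ))) ^ 2) / 2
      = -(N * ε ^ 2) / (2 * (Fintype.card 𝒳 : ℝ) ^ 2 * (Fintype.card 𝒴 : ℝ) ^ 2) := by
    field_simp
  rw [hcard, harg]
  ring
end

section
/- Let 𝒜 and ℬ be finite sets with |𝒜| ≥ 2 and |ℬ| ≥ 2, and let p, q be pmfs on 𝒜 × ℬ with marginals p_B, q_B on ℬ. Set D₁ = √(2 ln 2) · √(D(q‖p)) and D₂ = √(2 ln 2) · √(D(q_B‖p_B)). If 0 < D₂ and D₁ ≤ 1/2 (note D₂ ≤ D₁), then H_q(A|B) − H_p(A|B) ≤ D₁ log₂( |𝒜||ℬ| / D₁ ) + D₂ log₂( |ℬ| / D₂ ), where H_r(A|B) = H(r) − H(r_B) denotes the base-2 conditional entropy under the joint pmf r. (Conditional-entropy continuity bound, steps (a)–(c) of Eq. (eqaaaa) in the proof of Lemma 2 of the paper.) -/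
open scoped ENNReal BigOperators

attribute [local instance] Classical.propDecidable

/-- Kullback–Leibler divergence (base 2) between two pmfs on a finite set,
valued in `[0, +∞]`. -/
noncomputable def klDiv {α : Type*} [Fintype α] (p q : α → ℝ) : ℝ≥0∞ :=
  if ∀ x, q x = 0 → p x = 0 then
    ENNReal.ofReal (∑ x, p x * Real.logb 2 (p x / q x))
  else ⊤

/-- Base-2 Shannon entropy of a pmf. -/
noncomputable def shannonEntropy {α : Type*} [Fintype α] (p : α → ℝ) : ℝ :=
  -∑ x, p x * Real.logb 2 (p x)

/-- `ℬ`-marginal of a joint pmf on `𝒜 × ℬ`. -/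
noncomputable def margB {𝒜 ℬ : Type*} [Fintype 𝒜] [Fintype ℬ]
    (p : 𝒜 × ℬ → ℝ) : ℬ → ℝ :=
  fun b => ∑ a, p (a, b)

/-- Conditional entropy `H_r(A|B) = H(r) − H(r_B)` of a joint pmf `r` on
`𝒜 × ℬ` (base-2). -/
noncomputable def condEntAB {𝒜 ℬ : Type*} [Fintype 𝒜] [Fintype ℬ]
    (r : 𝒜 × ℬ → ℝ) : ℝ :=
  shannonEntropy r - shannonEntropy (margB r)

section Helpers

open Real Finset Set

lemma gibbs_point {a b : ℝ} (ha : 0 ≤ a) (hb : 0 ≤ b) (h : b = 0 → a = 0) :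
    a - b ≤ a * Real.log (a / b) := by
  rcases eq_or_lt_of_le ha with h0 | ha'
  · simp only [← h0, zero_mul, zero_sub, neg_nonpos]; linarith
  · have hb' : 0 < b := by
      rcases eq_or_lt_of_le hb with h0 | h'
      · exact absurd (h h0.symm) (by linarith)
      · exact h'
    have h1 : Real.log (b / a) ≤ b / a - 1 := Real.log_le_sub_one_of_pos (by positivity)
    have h2 : Real.log (a / b) = -Real.log (b / a) := by
      rw [← Real.log_inv]; congr 1; rw [inv_div]
    have h3 : a * Real.log (b / a) ≤ a * (b / a - 1) := by
      exact mul_le_mul_of_nonneg_left h1 ha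
    have h4 : a * (b / a - 1) = b - a := by field_simp
    rw [h2]; linarith

lemma log_sum_ineq {ι : Type*} (s : Finset ι) (a b : ι → ℝ)
    (ha : ∀ i ∈ s, 0 ≤ a i) (hb : ∀ i ∈ s, 0 ≤ b i)
    (hab : ∀ i ∈ s, b i = 0 → a i = 0) :
    (∑ i ∈ s, a i) * Real.log ((∑ i ∈ s, a i) / (∑ i ∈ s, b i)) ≤
      ∑ i ∈ s, a i * Real.log (a i / b i) := by
  set A := ∑ i ∈ s, a i with hA
  set B := ∑ i ∈ s, b i with hB
  have hA0 : 0 ≤ A := Finset.sum_nonneg ha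
  have hB0 : 0 ≤ B := Finset.sum_nonneg hb
  rcases eq_or_lt_of_le hA0 with hA' | hA'
  · have hz : ∀ i ∈ s, a i = 0 := by
      intro i hi
      exact (Finset.sum_eq_zero_iff_of_nonneg ha).mp hA'.symm i hi
    rw [← hA', zero_mul]
    apply Finset.sum_nonneg; intro i hi; rw [hz i hi]; simp
  · have hB' : 0 < B := by
      rcases eq_or_lt_of_le hB0 with hB'' | h; swap; · exact h
      exfalso
      have hb0 : ∀ i ∈ s, b i = 0 := (Finset.sum_eq_zero_iff_of_nonneg hb).mp hB''.symm
      have : A = 0 := Finset.sum_eq_zero fun i hi => hab i hi (hb0 i hi)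
      linarith
    set t := A / B with ht
    have ht0 : 0 < t := div_pos hA' hB'
    have key : ∀ i ∈ s, a i * Real.log t + (a i - t * b i) ≤ a i * Real.log (a i / b i) := by
      intro i hi
      rcases eq_or_lt_of_le (ha i hi) with h0 | hai
      · rw [← h0]
        simp only [zero_mul, zero_add, zero_sub, zero_mul]
        have : 0 ≤ t * b i := mul_nonneg ht0.le (hb i hi)
        linarith
      · have hbi : 0 < b i := by
          rcases eq_or_lt_of_le (hb i hi) with e | h'
          · exact absurd (hab i hi e.symm) (by linarith)
          · exact h'
        have hg := gibbs_point (a := a i) (b := t * b i) (ha i hi)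
          (by positivity) (fun e => absurd e (by positivity))
        have hlog : Real.log (a i / (t * b i)) = Real.log (a i / b i) - Real.log t := by
          rw [Real.log_div (ne_of_gt hai) (by positivity),
            Real.log_div (ne_of_gt hai) (ne_of_gt hbi),
            Real.log_mul (ne_of_gt ht0) (ne_of_gt hbi)]
          ring
        rw [hlog] at hg
        nlinarith [hg]
    have hsum := Finset.sum_le_sum key
    have hexp : ∑ i ∈ s, (a i * Real.log t + (a i - t * b i)) =
        A * Real.log t + (A - t * B) := by
      rw [Finset.sum_add_distrib, ← Finset.sum_mul, Finset.sum_sub_distrib, ← Finset.mul_sum]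
    have htB : t * B = A := by rw [ht]; field_simp
    rw [hexp, htB] at hsum
    calc A * Real.log (A / B) = A * Real.log t + (A - A) := by rw [ht]; ring
      _ ≤ _ := hsum

lemma xlog_mono {x y d : ℝ} (hx : 0 ≤ x) (hxy : x ≤ y) (hy2 : y ≤ 1/2) (hy0 : 0 < y)
    (hd : 2 ≤ d) :
    x * Real.log d - x * Real.log x ≤ y * Real.log d - y * Real.log y := by
  have hld : Real.log 2 ≤ Real.log d := Real.log_le_log (by norm_num) hd
  have hl2 : (0.6931471803 : ℝ) < Real.log 2 := Real.log_two_gt_d9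
  have hly : Real.log y ≤ -Real.log 2 := by
    rw [← Real.log_inv]
    exact Real.log_le_log hy0 (by linarith)
  rcases eq_or_lt_of_le hx with h0 | hx'
  · rw [← h0]
    simp only [zero_mul, sub_zero, zero_sub]
    nlinarith
  · have h1 : Real.log y - Real.log x = Real.log (y / x) := (Real.log_div hy0.ne' hx'.ne').symm
    have h2 : Real.log (y / x) ≤ y / x - 1 := Real.log_le_sub_one_of_pos (by positivity)
    have h3 : x * Real.log (y / x) ≤ x * (y / x - 1) := mul_le_mul_of_nonneg_left h2 hx
    have h4 : x * (y / x - 1) = y - x := by field_simp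
    have h5 : x * (Real.log y - Real.log x) ≤ y - x := by rw [h1]; linarith
    have h6 : (y - x) * Real.log y ≤ (y - x) * (-Real.log 2) :=
      mul_le_mul_of_nonneg_left hly (by linarith)
    have h7 : (y - x) * (1 - Real.log 2) ≤ (y - x) * Real.log d :=
      mul_le_mul_of_nonneg_left (by linarith) (by linarith)
    nlinarith [h5, h6, h7]

lemma hasDerivAt_quad (c x : ℝ) : HasDerivAt (fun y : ℝ => 2 * (c - y)^2) (-4 * (c - x)) x := by
  have h : HasDerivAt (fun y : ℝ => c - y) (-1) x := (hasDerivAt_id x).const_sub c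
  have h2 := (h.pow 2).const_mul (2 : ℝ)
  exact h2.congr_deriv (by norm_num; ring)

lemma neg_log_bound {b : ℝ} (hb : 0 < b) (hb1 : b ≤ 1) : 2 * (1 - b)^2 ≤ -Real.log b := by
  have key : AntitoneOn (fun x => -Real.log x - 2 * (1 - x)^2) (Icc b 1) := by
    apply antitoneOn_of_deriv_nonpos (convex_Icc b 1)
    · apply ContinuousOn.sub
      · refine (Real.continuousOn_log.mono ?_).neg
        intro x hx
        simp only [Set.mem_Icc, Set.mem_compl_iff, Set.mem_singleton_iff] at hx ⊢
        intro e; rw [e] at hx; linarith [hx.1]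
      · fun_prop
    · intro x hx
      rw [interior_Icc] at hx
      have hx0 : x ≠ 0 := by intro e; rw [e] at hx; exact absurd hx.1 (by linarith)
      exact (((Real.hasDerivAt_log hx0).neg).sub (hasDerivAt_quad 1 x)).differentiableAt.differentiableWithinAt
    · intro x hx
      rw [interior_Icc] at hx
      obtain ⟨hx1, hx2⟩ := hx
      have hx0 : 0 < x := lt_trans hb hx1
      have hd := (((Real.hasDerivAt_log hx0.ne').neg).sub (hasDerivAt_quad 1 x)).deriv
      rw [show deriv (fun x => -Real.log x - 2 * (1 - x) ^ 2) x = _ from hd]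
      have hkey : (-x⁻¹ - -4 * (1 - x)) * x = -1 + 4 * (1 - x) * x := by
        field_simp
        ring
      have hrhs : -1 + 4 * (1 - x) * x ≤ 0 := by nlinarith [sq_nonneg (2 * x - 1)]
      nlinarith [hx0, hkey, hrhs]
  have h := key (Set.mem_Icc.mpr ⟨le_rfl, hb1⟩) (Set.mem_Icc.mpr ⟨hb1, le_rfl⟩) hb1
  simp only [Real.log_one, neg_zero, sub_self] at h
  norm_num at h
  linarith

lemma binPinsker {a b : ℝ} (hb0 : 0 ≤ b) (hba : b ≤ a) (ha1 : a ≤ 1)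
    (hsupp : b = 0 → a = 0) :
    2 * (a - b)^2 ≤ a * Real.log (a / b) + (1 - a) * Real.log ((1 - a) / (1 - b)) := by
  rcases eq_or_lt_of_le hb0 with h0 | hb'
  · have ha0 : a = 0 := hsupp h0.symm
    simp [ha0, ← h0]
  rcases eq_or_lt_of_le hba with hba' | hba'
  · rw [← hba']
    have e1 : b / b = 1 := div_self hb'.ne'
    by_cases hb1 : (1:ℝ) - b = 0
    · rw [e1, hb1]; simp
    · have e2 : (1-b)/(1-b) = 1 := div_self hb1
      rw [e1, e2]; simp
  rcases eq_or_lt_of_le ha1 with ha1' | ha1'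
  · -- a = 1
    subst ha1'
    simp only [sub_self, zero_mul, add_zero, one_mul]
    rw [one_div, Real.log_inv]
    have := neg_log_bound hb' (by linarith)
    nlinarith [this]
  -- 0 < b < a < 1
  have ha0 : 0 < a := lt_of_le_of_lt hb0 hba'
  set G : ℝ → ℝ := fun x => a * Real.log a - a * Real.log x + (1 - a) * Real.log (1 - a)
      - (1 - a) * Real.log (1 - x) - 2 * (a - x)^2 with hG
  have hderiv : ∀ x, 0 < x → x < 1 →
      HasDerivAt G (-(a * x⁻¹) + (1 - a) * (1 - x)⁻¹ + 4 * (a - x)) x := by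
    intro x hx0 hx1
    have d1 : HasDerivAt (fun x : ℝ => a * Real.log x) (a * x⁻¹) x :=
      (Real.hasDerivAt_log hx0.ne').const_mul a
    have d2 : HasDerivAt (fun x : ℝ => (1 - a) * Real.log (1 - x))
        ((1 - a) * ((1 - x)⁻¹ * (-1))) x := by
      have hinner : HasDerivAt (fun x : ℝ => 1 - x) (-1) x := (hasDerivAt_id x).const_sub 1
      exact ((Real.hasDerivAt_log (by linarith : (0:ℝ) < 1 - x).ne').comp x hinner).const_mul (1 - a)
    have d3 := hasDerivAt_quad a x
    have hbig := (((d1.const_sub (a * Real.log a)).add_const ((1 - a) * Real.log (1 - a))).sub d2).sub d3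
    -- hbig : HasDerivAt (fun x => a*log a - a*log x + c - (1-a)*log(1-x) - 2*(a-x)^2)
    --   (-(a*x⁻¹) - (1-a)*((1-x)⁻¹*(-1)) - (-4*(a-x))) x
    have : (-(a * x⁻¹) + (1 - a) * (1 - x)⁻¹ + 4 * (a - x))
        = -(a * x⁻¹) - (1 - a) * ((1 - x)⁻¹ * (-1)) - (-4 * (a - x)) := by ring
    rw [this]
    exact hbig
  have hanti : AntitoneOn G (Icc b a) := by
    apply antitoneOn_of_deriv_nonpos (convex_Icc b a)
    · have c1 : ContinuousOn (fun x : ℝ => Real.log x) (Icc b a) := by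
        refine Real.continuousOn_log.mono ?_
        intro x hx
        simp only [Set.mem_Icc, Set.mem_compl_iff, Set.mem_singleton_iff] at hx ⊢
        intro e; rw [e] at hx; linarith [hx.1]
      have c2 : ContinuousOn (fun x : ℝ => Real.log (1 - x)) (Icc b a) := by
        refine Real.continuousOn_log.comp (by fun_prop) ?_
        intro x hx
        simp only [Set.mem_Icc, Set.mem_compl_iff, Set.mem_singleton_iff] at hx ⊢
        intro e; rw [sub_eq_zero] at e; linarith [hx.2, ha1']
      exact ((((continuousOn_const.sub (continuousOn_const.mul c1)).add
        continuousOn_const).sub (continuousOn_const.mul c2)).sub (by fun_prop))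
    · intro x hx
      rw [interior_Icc] at hx
      exact (hderiv x (lt_trans hb' hx.1) (lt_trans hx.2 ha1')).differentiableAt.differentiableWithinAt
    · intro x hx
      rw [interior_Icc] at hx
      have hx0 : 0 < x := lt_trans hb' hx.1
      have hx1 : x < 1 := lt_trans hx.2 ha1'
      rw [(hderiv x hx0 hx1).deriv]
      have h1x : (0:ℝ) < 1 - x := by linarith
      have hxx : 0 < x * (1 - x) := mul_pos hx0 h1x
      have hkey : (-(a * x⁻¹) + (1 - a) * (1 - x)⁻¹ + 4 * (a - x)) * (x * (1 - x))
          = (x - a) + 4 * (a - x) * (x * (1 - x)) := by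
        field_simp
        ring
      have hax : 0 ≤ a - x := by linarith [hx.2]
      have h4 : 4 * (x * (1 - x)) ≤ 1 := by nlinarith [sq_nonneg (2 * x - 1)]
      have hrhs : (x - a) + 4 * (a - x) * (x * (1 - x)) ≤ 0 := by nlinarith
      nlinarith [hxx, hkey, hrhs]
  have h := hanti (Set.mem_Icc.mpr ⟨le_rfl, hba⟩) (Set.mem_Icc.mpr ⟨hba, le_rfl⟩) hba
  have hGa : G a = 0 := by simp [hG]
  have hGb : G b = a * Real.log (a / b) + (1 - a) * Real.log ((1 - a) / (1 - b)) - 2 * (a - b)^2 := by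
    rw [hG]
    simp only
    rw [Real.log_div ha0.ne' hb'.ne',
      Real.log_div (by linarith : (1:ℝ) - a ≠ 0) (by linarith : (1:ℝ) - b ≠ 0)]
    ring
  rw [hGa, hGb] at h
  linarith

lemma pinsker {α : Type*} [Fintype α] {p q : α → ℝ} (hp : IsPMF p) (hq : IsPMF q)
    (habs : ∀ x, p x = 0 → q x = 0) :
    (∑ x, |q x - p x|)^2 ≤ 2 * ∑ x, q x * Real.log (q x / p x) := by
  classical
  set A : Finset α := Finset.univ.filter (fun x => p x ≤ q x) with hA
  set Ac : Finset α := Finset.univ.filter (fun x => ¬ p x ≤ q x) with hAc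
  have hsplit : ∀ f : α → ℝ, ∑ x, f x = ∑ x ∈ A, f x + ∑ x ∈ Ac, f x := fun f =>
    (Finset.sum_filter_add_sum_filter_not Finset.univ _ f).symm
  set a := ∑ x ∈ A, q x with ha
  set b := ∑ x ∈ A, p x with hb
  have hqAc : ∑ x ∈ Ac, q x = 1 - a := by
    have := hsplit q; rw [hq.2] at this; linarith
  have hpAc : ∑ x ∈ Ac, p x = 1 - b := by
    have := hsplit p; rw [hp.2] at this; linarith
  have hb0 : 0 ≤ b := Finset.sum_nonneg fun x _ => hp.1 x
  have hba : b ≤ a := Finset.sum_le_sum fun x hx => (Finset.mem_filter.mp hx).2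
  have ha1 : a ≤ 1 := by
    have h1 : 0 ≤ ∑ x ∈ Ac, q x := Finset.sum_nonneg fun x _ => hq.1 x
    rw [hqAc] at h1; linarith
  have hsupp : b = 0 → a = 0 := by
    intro h0
    have hz : ∀ x ∈ A, p x = 0 :=
      (Finset.sum_eq_zero_iff_of_nonneg fun x _ => hp.1 x).mp h0
    exact Finset.sum_eq_zero fun x hx => habs x (hz x hx)
  -- L1 norm
  have habsA : ∀ x ∈ A, |q x - p x| = q x - p x := fun x hx =>
    abs_of_nonneg (by linarith [(Finset.mem_filter.mp hx).2])
  have habsAc : ∀ x ∈ Ac, |q x - p x| = p x - q x := fun x hx => by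
    have := (Finset.mem_filter.mp hx).2
    rw [abs_of_neg (by linarith [lt_of_not_ge this])]
    ring
  have hV : ∑ x, |q x - p x| = 2 * (a - b) := by
    rw [hsplit (fun x => |q x - p x|), Finset.sum_congr rfl habsA,
      Finset.sum_congr rfl habsAc, Finset.sum_sub_distrib, Finset.sum_sub_distrib,
      hqAc, hpAc]
    ring
  -- KL bound
  have hKLA : a * Real.log (a / b) ≤ ∑ x ∈ A, q x * Real.log (q x / p x) :=
    log_sum_ineq A q p (fun x _ => hq.1 x) (fun x _ => hp.1 x) (fun x _ => habs x)
  have hKLAc : (1 - a) * Real.log ((1 - a) / (1 - b)) ≤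
      ∑ x ∈ Ac, q x * Real.log (q x / p x) := by
    have := log_sum_ineq Ac q p (fun x _ => hq.1 x) (fun x _ => hp.1 x) (fun x _ => habs x)
    rwa [hqAc, hpAc] at this
  have hbin := binPinsker hb0 hba ha1 hsupp
  have hKL : 2 * (a - b)^2 ≤ ∑ x, q x * Real.log (q x / p x) := by
    rw [hsplit (fun x => q x * Real.log (q x / p x))]
    linarith
  rw [hV]
  nlinarith [hKL]

-- eta lemmas
lemma eta_subadd {t e : ℝ} (ht : 0 ≤ t) (he : 0 ≤ e) :
    Real.negMulLog (t + e) ≤ Real.negMulLog t + Real.negMulLog e := by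
  rcases eq_or_lt_of_le ht with h0 | ht'
  · rw [← h0]; simp
  rcases eq_or_lt_of_le he with h0 | he'
  · rw [← h0]; simp
  simp only [Real.negMulLog, neg_mul]
  have l1 : Real.log t ≤ Real.log (t + e) := Real.log_le_log ht' (by linarith)
  have l2 : Real.log e ≤ Real.log (t + e) := Real.log_le_log he' (by linarith)
  nlinarith [mul_le_mul_of_nonneg_left l1 ht, mul_le_mul_of_nonneg_left l2 he]

lemma eta_one_sub {e : ℝ} (h0 : 0 ≤ e) (h1 : e ≤ 1/2) :
    Real.negMulLog (1 - e) ≤ Real.negMulLog e := by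
  set ψ : ℝ → ℝ := fun x => Real.negMulLog x - Real.negMulLog (1 - x) with hψ
  have hd : ∀ x ∈ Set.Ioo (0:ℝ) (1/2), HasDerivAt ψ
      (-Real.log x - 1 - (Real.log (1 - x) + 1)) x := by
    intro x hx
    have hx0 : x ≠ 0 := ne_of_gt hx.1
    have hx1 : (1:ℝ) - x ≠ 0 := by have := hx.2; intro e'; apply hx0; linarith [sub_eq_zero.mp e']
    have d1 := Real.hasDerivAt_negMulLog hx0
    have hinner : HasDerivAt (fun x : ℝ => 1 - x) (-1) x := (hasDerivAt_id x).const_sub 1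
    have d2 : HasDerivAt (fun x => Real.negMulLog (1 - x))
        ((-Real.log (1 - x) - 1) * (-1)) x :=
      (Real.hasDerivAt_negMulLog hx1).comp x hinner
    have := d1.sub d2
    exact this.congr_deriv (by ring)
  have hconc : ConcaveOn ℝ (Icc (0:ℝ) (1/2)) ψ := by
    apply AntitoneOn.concaveOn_of_deriv (convex_Icc 0 (1/2))
    · fun_prop
    · intro x hx
      rw [interior_Icc] at hx
      exact (hd x hx).differentiableAt.differentiableWithinAt
    · rw [interior_Icc]
      intro x hx y hy hxy
      rw [(hd x hx).deriv, (hd y hy).deriv]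
      have hlx : Real.log x + Real.log (1 - x) = Real.log (x * (1 - x)) :=
        (Real.log_mul (ne_of_gt hx.1) (by have := hx.2; intro e'; nlinarith [sub_eq_zero.mp e'])).symm
      have hly : Real.log y + Real.log (1 - y) = Real.log (y * (1 - y)) :=
        (Real.log_mul (ne_of_gt hy.1) (by have := hy.2; intro e'; nlinarith [sub_eq_zero.mp e'])).symm
      have hmono : Real.log (x * (1 - x)) ≤ Real.log (y * (1 - y)) := by
        apply Real.log_le_log (by nlinarith [hx.1, hx.2])
        nlinarith [hx.1, hx.2, hy.1, hy.2, hxy]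
      linarith
  have ha' : (0:ℝ) ≤ 1 - 2*e := by linarith
  have hb' : (0:ℝ) ≤ 2*e := by linarith
  have hab' : (1 - 2*e) + 2*e = 1 := by ring
  have h := hconc.2 (Set.mem_Icc.mpr ⟨le_rfl, by norm_num⟩)
    (Set.mem_Icc.mpr ⟨by norm_num, le_rfl⟩) ha' hb' hab'
  have hψ0 : ψ 0 = 0 := by simp [hψ]
  have hψh : ψ (1/2) = 0 := by norm_num [hψ]
  rw [hψ0, hψh] at h
  simp only [smul_eq_mul, mul_zero, zero_add, add_zero, smul_zero] at h
  have he'' : 2 * e * (1/2 : ℝ) = e := by ring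
  rw [he''] at h
  rw [hψ] at h
  simp only at h
  linarith

lemma eta_rev {t e : ℝ} (ht : 0 ≤ t) (he : 0 < e) (he2 : e ≤ 1/2) (hte : t + e ≤ 1) :
    Real.negMulLog t ≤ Real.negMulLog (t + e) + Real.negMulLog e := by
  set χ : ℝ → ℝ := fun x => Real.negMulLog (x + e) + Real.negMulLog e - Real.negMulLog x with hχ
  have hanti : AntitoneOn χ (Icc (0:ℝ) (1 - e)) := by
    apply antitoneOn_of_deriv_nonpos (convex_Icc 0 (1 - e))
    · fun_prop
    · intro x hx
      rw [interior_Icc] at hx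
      have hx0 : x ≠ 0 := ne_of_gt hx.1
      have hxp := hx.1
      have hxe : x + e ≠ 0 := (by linarith : (0:ℝ) < x + e).ne'
      have d1 : HasDerivAt (fun x => Real.negMulLog (x + e))
          ((-Real.log (x + e) - 1) * 1) x :=
        by have := (Real.hasDerivAt_negMulLog hxe).comp x ((hasDerivAt_id' x).add_const e); exact this
      exact ((d1.add_const _).sub (Real.hasDerivAt_negMulLog hx0)).differentiableAt.differentiableWithinAt
    · intro x hx
      rw [interior_Icc] at hx
      have hx0 : (0:ℝ) < x := hx.1
      have hxe : (0:ℝ) < x + e := by linarith [hx.1]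
      have d1 : HasDerivAt (fun x => Real.negMulLog (x + e))
          ((-Real.log (x + e) - 1) * 1) x :=
        by have := (Real.hasDerivAt_negMulLog hxe.ne').comp x ((hasDerivAt_id' x).add_const e); exact this
      have d := (d1.add_const (Real.negMulLog e)).sub (Real.hasDerivAt_negMulLog hx0.ne')
      rw [show deriv χ x = _ from d.deriv]
      have : Real.log x ≤ Real.log (x + e) := Real.log_le_log hx0 (by linarith)
      linarith
  have h := hanti (Set.mem_Icc.mpr ⟨ht, by linarith⟩)
    (Set.mem_Icc.mpr ⟨by linarith, le_rfl⟩) (by linarith)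
  have hend : χ (1 - e) = Real.negMulLog e - Real.negMulLog (1 - e) := by
    simp [hχ]
  have h2 := eta_one_sub he.le he2
  rw [hend] at h
  have : 0 ≤ χ t := by linarith
  rw [hχ] at this
  simp only at this
  linarith

lemma eta_abs {s t : ℝ} (hs0 : 0 ≤ s) (hs1 : s ≤ 1) (ht0 : 0 ≤ t) (ht1 : t ≤ 1)
    (hd : |s - t| ≤ 1/2) :
    |Real.negMulLog s - Real.negMulLog t| ≤ Real.negMulLog |s - t| := by
  have key : ∀ u v : ℝ, 0 ≤ u → u ≤ v → v ≤ 1 → v - u ≤ 1/2 →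
      |Real.negMulLog v - Real.negMulLog u| ≤ Real.negMulLog (v - u) := by
    intro u v hu huv hv1 hd'
    rcases eq_or_lt_of_le huv with h0 | huv'
    · rw [h0]; simp
    rw [abs_le]
    constructor
    · have := eta_rev hu (by linarith : 0 < v - u) hd' (by linarith)
      have h2 : u + (v - u) = v := by ring
      rw [h2] at this
      linarith
    · have := eta_subadd hu (by linarith : (0:ℝ) ≤ v - u)
      have h2 : u + (v - u) = v := by ring
      rw [h2] at this
      linarith
  rcases le_total t s with h | h
  · have := key t s ht0 h hs1 (by rwa [abs_of_nonneg (by linarith)] at hd)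
    rwa [abs_of_nonneg (by linarith : (0:ℝ) ≤ s - t)]
  · have := key s t hs0 h ht1 (by rwa [abs_of_nonpos (by linarith), neg_sub] at hd)
    rw [abs_of_nonpos (by linarith : s - t ≤ 0), neg_sub]
    rwa [abs_sub_comm]

lemma Hn_diff {α : Type*} [Fintype α] {p q : α → ℝ} (hp : IsPMF p) (hq : IsPMF q)
    (hcard : 0 < Fintype.card α)
    (hθ : ∑ x, |p x - q x| ≤ 1/2) :
    (-∑ x, q x * Real.log (q x)) - (-∑ x, p x * Real.log (p x)) ≤
      (∑ x, |p x - q x|) * Real.log (Fintype.card α)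
        - (∑ x, |p x - q x|) * Real.log (∑ x, |p x - q x|) := by
  classical
  set θ := ∑ x, |p x - q x| with hθdef
  have hθ0 : 0 ≤ θ := Finset.sum_nonneg fun x _ => abs_nonneg _
  have hle1 : ∀ r : α → ℝ, IsPMF r → ∀ x, r x ≤ 1 := by
    intro r hr x
    rw [← hr.2]
    exact Finset.single_le_sum (fun y _ => hr.1 y) (Finset.mem_univ x)
  have hεle : ∀ x, |p x - q x| ≤ θ := fun x =>
    Finset.single_le_sum (fun y (_ : y ∈ Finset.univ) => abs_nonneg (p y - q y)) (Finset.mem_univ x)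
  -- step 1
  have step1 : (-∑ x, q x * Real.log (q x)) - (-∑ x, p x * Real.log (p x)) ≤
      ∑ x, Real.negMulLog (|p x - q x|) := by
    have h1 : (-∑ x, q x * Real.log (q x)) - (-∑ x, p x * Real.log (p x)) =
        ∑ x, (Real.negMulLog (q x) - Real.negMulLog (p x)) := by
      rw [Finset.sum_sub_distrib]
      simp [Real.negMulLog, Finset.sum_neg_distrib]
      try ring
    rw [h1]
    apply Finset.sum_le_sum
    intro x _
    have h2 := eta_abs (hq.1 x) (hle1 q hq x) (hp.1 x) (hle1 p hp x)
      (by rw [abs_sub_comm]; exact le_trans (hεle x) hθ)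
    calc Real.negMulLog (q x) - Real.negMulLog (p x)
        ≤ |Real.negMulLog (q x) - Real.negMulLog (p x)| := le_abs_self _
      _ ≤ Real.negMulLog |q x - p x| := h2
      _ = Real.negMulLog |p x - q x| := by rw [abs_sub_comm]
  refine le_trans step1 ?_
  -- step 2
  rcases eq_or_lt_of_le hθ0 with h0 | hθ'
  · have hz : ∀ x, |p x - q x| = 0 := by
      intro x
      have := (Finset.sum_eq_zero_iff_of_nonneg
        (fun y (_ : y ∈ Finset.univ) => abs_nonneg (p y - q y))).mp h0.symm
      exact this x (Finset.mem_univ x)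
    rw [← h0]
    simp only [zero_mul, sub_zero, zero_sub]
    calc ∑ x, Real.negMulLog |p x - q x| = 0 := by
          apply Finset.sum_eq_zero; intro x _; rw [hz x]; simp
      _ ≤ _ := by simp
  · set d : ℝ := (Fintype.card α : ℝ) with hd
    have hd0 : (0:ℝ) < d := by rw [hd]; exact_mod_cast hcard
    have key := log_sum_ineq Finset.univ (fun x => |p x - q x|) (fun _ => θ / d)
      (fun x _ => abs_nonneg _) (fun x _ => by positivity)
      (fun x _ e => absurd e (by positivity : θ / d ≠ 0))
    have hsb : ∑ _x : α, θ / d = θ := by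
      rw [Finset.sum_const, Finset.card_univ, nsmul_eq_mul]
      have hcd : (Fintype.card α : ℝ) = d := hd.symm
      rw [hcd]
      field_simp
    rw [hsb] at key
    have hlog1 : Real.log (θ / θ) = 0 := by rw [div_self hθ'.ne']; simp
    rw [hlog1, mul_zero] at key
    have hterm : ∀ x, |p x - q x| * Real.log (|p x - q x| / (θ / d)) =
        |p x - q x| * Real.log (|p x - q x|) - |p x - q x| * Real.log (θ / d) := by
      intro x
      rcases eq_or_lt_of_le (abs_nonneg (p x - q x)) with h0 | h'
      · rw [← h0]; simp
      · rw [Real.log_div h'.ne' (by positivity)]; ring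
    rw [Finset.sum_congr rfl (fun x _ => hterm x), Finset.sum_sub_distrib,
      ← Finset.sum_mul] at key
    have hlogdiv : Real.log (θ / d) = Real.log θ - Real.log d :=
      Real.log_div hθ'.ne' hd0.ne'
    rw [hlogdiv] at key
    have hsum : ∑ x, Real.negMulLog |p x - q x| = -∑ x, |p x - q x| * Real.log (|p x - q x|) := by
      simp [Real.negMulLog, Finset.sum_neg_distrib]
    rw [hsum]
    nlinarith [key]

-- marginal lemmas
lemma margB_isPMF {𝒜 ℬ : Type*} [Fintype 𝒜] [Fintype ℬ] {p : 𝒜 × ℬ → ℝ} (hp : IsPMF p) :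
    IsPMF (margB p) := by
  constructor
  · intro b
    exact Finset.sum_nonneg fun a _ => hp.1 (a, b)
  · rw [← hp.2, Fintype.sum_prod_type_right]
    simp only [margB]

lemma margB_support {𝒜 ℬ : Type*} [Fintype 𝒜] [Fintype ℬ] {p q : 𝒜 × ℬ → ℝ}
    (hp : IsPMF p) (hq : IsPMF q) (h : ∀ x, p x = 0 → q x = 0) :
    ∀ b, margB p b = 0 → margB q b = 0 := by
  intro b hb
  have hz : ∀ a, p (a, b) = 0 := by
    intro a
    have := (Finset.sum_eq_zero_iff_of_nonneg
      (fun a (_ : a ∈ Finset.univ) => hp.1 (a, b))).mp hb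
    exact this a (Finset.mem_univ a)
  exact Finset.sum_eq_zero fun a _ => h (a, b) (hz a)

lemma margB_l1 {𝒜 ℬ : Type*} [Fintype 𝒜] [Fintype ℬ] (p q : 𝒜 × ℬ → ℝ) :
    ∑ b, |margB q b - margB p b| ≤ ∑ x, |q x - p x| := by
  rw [Fintype.sum_prod_type_right]
  apply Finset.sum_le_sum
  intro b _
  calc |margB q b - margB p b| = |∑ a, (q (a, b) - p (a, b))| := by
        rw [margB, margB, ← Finset.sum_sub_distrib]
    _ ≤ ∑ a, |q (a, b) - p (a, b)| := Finset.abs_sum_le_sum_abs _ _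
  -- mismatch: goal is ∑ a, |q (a,b) - p (a,b)| as inner sum of prod
lemma margB_kl {𝒜 ℬ : Type*} [Fintype 𝒜] [Fintype ℬ] {p q : 𝒜 × ℬ → ℝ}
    (hp : IsPMF p) (hq : IsPMF q) (h : ∀ x, p x = 0 → q x = 0) :
    ∑ b, margB q b * Real.log (margB q b / margB p b) ≤
      ∑ x, q x * Real.log (q x / p x) := by
  rw [Fintype.sum_prod_type_right]
  apply Finset.sum_le_sum
  intro b _
  exact log_sum_ineq Finset.univ (fun a => q (a, b)) (fun a => p (a, b))
    (fun a _ => hq.1 (a, b)) (fun a _ => hp.1 (a, b)) (fun a _ => h (a, b))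

lemma sum_logb_eq {α : Type*} [Fintype α] (q r : α → ℝ) :
    ∑ x, q x * Real.logb 2 (r x) = (∑ x, q x * Real.log (r x)) / Real.log 2 := by
  rw [Finset.sum_div]
  apply Finset.sum_congr rfl
  intro x _
  rw [Real.logb]
  ring

lemma shannon_eq {α : Type*} [Fintype α] (p : α → ℝ) :
    shannonEntropy p = (-∑ x, p x * Real.log (p x)) / Real.log 2 := by
  rw [shannonEntropy, sum_logb_eq, neg_div]

end Helpers

/-- Conditional-entropy continuity bound, steps (a)–(c) of Eq. (eqaaaa) in the
proof of Lemma 2: with `D₁ = √(2 ln 2)·√(D(q‖p))` and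
`D₂ = √(2 ln 2)·√(D(q_B‖p_B))` (in `[0,+∞]`), if `0 < D₂` and `D₁ ≤ 1/2`, then
`H_q(A|B) − H_p(A|B) ≤ D₁ log₂(|𝒜||ℬ|/D₁) + D₂ log₂(|ℬ|/D₂)`. -/
theorem condEnt_diff_le
    {𝒜 ℬ : Type*} [Fintype 𝒜] [Fintype ℬ]
    (hA : 2 ≤ Fintype.card 𝒜) (hB : 2 ≤ Fintype.card ℬ)
    (p q : 𝒜 × ℬ → ℝ) (hp : IsPMF p) (hq : IsPMF q)
    (D₁ D₂ : ℝ≥0∞)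
    (hD₁ : D₁ = ENNReal.ofReal (Real.sqrt (2 * Real.log 2)) *
      (klDiv q p) ^ (1 / 2 : ℝ))
    (hD₂ : D₂ = ENNReal.ofReal (Real.sqrt (2 * Real.log 2)) *
      (klDiv (margB q) (margB p)) ^ (1 / 2 : ℝ))
    (hD₂0 : 0 < D₂) (hD₁half : D₁ ≤ ENNReal.ofReal (1 / 2)) :
    condEntAB q - condEntAB p ≤
      D₁.toReal * Real.logb 2
          ((Fintype.card 𝒜 : ℝ) * (Fintype.card ℬ : ℝ) / D₁.toReal) +
        D₂.toReal * Real.logb 2 ((Fintype.card ℬ : ℝ) / D₂.toReal) := by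
  have hlog2 : (0:ℝ) < Real.log 2 := Real.log_pos one_lt_two
  have hsqrt2log2 : (0:ℝ) < Real.sqrt (2 * Real.log 2) := Real.sqrt_pos.mpr (by linarith)
  -- support condition
  have hsupp : ∀ x, p x = 0 → q x = 0 := by
    by_contra h
    rw [klDiv, if_neg h, ENNReal.top_rpow_of_pos (by norm_num),
      ENNReal.mul_top (by simp [ENNReal.ofReal_eq_zero]; linarith)] at hD₁
    rw [hD₁, top_le_iff] at hD₁half
    exact ENNReal.ofReal_ne_top hD₁half
  have hsuppB : ∀ b, margB p b = 0 → margB q b = 0 := margB_support hp hq hsupp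
  have hpB : IsPMF (margB p) := margB_isPMF hp
  have hqB : IsPMF (margB q) := margB_isPMF hq
  -- natural-log KL quantities
  set N₁ : ℝ := ∑ x, q x * Real.log (q x / p x) with hN₁
  set N₂ : ℝ := ∑ b, margB q b * Real.log (margB q b / margB p b) with hN₂
  have hN₁0 : 0 ≤ N₁ := by
    have := log_sum_ineq Finset.univ q p (fun x _ => hq.1 x) (fun x _ => hp.1 x)
      (fun x _ => hsupp x)
    rw [hq.2, hp.2] at this
    simpa using this
  have hN₂0 : 0 ≤ N₂ := by
    have := log_sum_ineq Finset.univ (margB q) (margB p) (fun x _ => hqB.1 x)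
      (fun x _ => hpB.1 x) (fun x _ => hsuppB x)
    rw [hqB.2, hpB.2] at this
    simpa using this
  have hN₂₁ : N₂ ≤ N₁ := margB_kl hp hq hsupp
  -- rewrite D₁ D₂
  have hkl1 : klDiv q p = ENNReal.ofReal (N₁ / Real.log 2) := by
    rw [klDiv, if_pos hsupp, sum_logb_eq]
  have hkl2 : klDiv (margB q) (margB p) = ENNReal.ofReal (N₂ / Real.log 2) := by
    rw [klDiv, if_pos hsuppB, sum_logb_eq]
  have hDval : ∀ N : ℝ, 0 ≤ N →
      ENNReal.ofReal (Real.sqrt (2 * Real.log 2)) *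
        (ENNReal.ofReal (N / Real.log 2)) ^ (1 / 2 : ℝ) =
      ENNReal.ofReal (Real.sqrt (2 * N)) := by
    intro N hN
    rw [ENNReal.ofReal_rpow_of_nonneg (by positivity) (by norm_num),
      ← ENNReal.ofReal_mul hsqrt2log2.le]
    congr 1
    rw [← Real.sqrt_eq_rpow, ← Real.sqrt_mul (by positivity)]
    congr 1
    field_simp
  have hD₁e : D₁ = ENNReal.ofReal (Real.sqrt (2 * N₁)) := by
    rw [hD₁, hkl1, hDval N₁ hN₁0]
  have hD₂e : D₂ = ENNReal.ofReal (Real.sqrt (2 * N₂)) := by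
    rw [hD₂, hkl2, hDval N₂ hN₂0]
  have hD₁r : D₁.toReal = Real.sqrt (2 * N₁) := by
    rw [hD₁e, ENNReal.toReal_ofReal (Real.sqrt_nonneg _)]
  have hD₂r : D₂.toReal = Real.sqrt (2 * N₂) := by
    rw [hD₂e, ENNReal.toReal_ofReal (Real.sqrt_nonneg _)]
  -- basic facts about D values
  have hD₁half' : D₁.toReal ≤ 1 / 2 := by
    have := ENNReal.toReal_mono ENNReal.ofReal_ne_top hD₁half
    rwa [ENNReal.toReal_ofReal (by norm_num)] at this
  have hD₂pos : 0 < D₂.toReal := by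
    rw [hD₂e] at hD₂0
    rw [hD₂r]
    exact ENNReal.ofReal_pos.mp hD₂0
  have hD₂₁ : D₂.toReal ≤ D₁.toReal := by
    rw [hD₁r, hD₂r]
    exact Real.sqrt_le_sqrt (by linarith)
  have hD₁pos : 0 < D₁.toReal := lt_of_lt_of_le hD₂pos hD₂₁
  -- Pinsker
  set θ₁ : ℝ := ∑ x, |q x - p x| with hθ₁
  set θB : ℝ := ∑ b, |margB q b - margB p b| with hθB
  have hθ₁0 : 0 ≤ θ₁ := Finset.sum_nonneg fun x _ => abs_nonneg _
  have hθB0 : 0 ≤ θB := Finset.sum_nonneg fun x _ => abs_nonneg _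
  have hθ₁D : θ₁ ≤ D₁.toReal := by
    have hpk := pinsker hp hq hsupp
    rw [hD₁r]
    calc θ₁ = Real.sqrt (θ₁^2) := (Real.sqrt_sq hθ₁0).symm
      _ ≤ Real.sqrt (2 * N₁) := Real.sqrt_le_sqrt (by rw [hN₁]; exact hpk)
  have hθBD : θB ≤ D₂.toReal := by
    have hpk := pinsker hpB hqB hsuppB
    rw [hD₂r]
    calc θB = Real.sqrt (θB^2) := (Real.sqrt_sq hθB0).symm
      _ ≤ Real.sqrt (2 * N₂) := Real.sqrt_le_sqrt (by rw [hN₂]; exact hpk)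
  have hθB₁ : θB ≤ θ₁ := margB_l1 p q
  have hθ₁h : θ₁ ≤ 1/2 := le_trans hθ₁D hD₁half'
  have hθBh : θB ≤ 1/2 := le_trans hθB₁ hθ₁h
  -- cards
  set dA : ℝ := (Fintype.card 𝒜 : ℝ) with hdA
  set dB : ℝ := (Fintype.card ℬ : ℝ) with hdB
  have hdA2 : (2:ℝ) ≤ dA := by rw [hdA]; exact_mod_cast hA
  have hdB2 : (2:ℝ) ≤ dB := by rw [hdB]; exact_mod_cast hB
  have hdAB : (Fintype.card (𝒜 × ℬ) : ℝ) = dA * dB := by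
    rw [Fintype.card_prod]; push_cast; rw [hdA, hdB]
  have hdAB2 : (2:ℝ) ≤ dA * dB := by nlinarith
  -- entropy bounds
  have hEnt1 : (-∑ x, q x * Real.log (q x)) - (-∑ x, p x * Real.log (p x)) ≤
      D₁.toReal * Real.log (dA * dB) - D₁.toReal * Real.log (D₁.toReal) := by
    have h1 := Hn_diff hp hq (by rw [Fintype.card_prod]; positivity)
      (by rw [show ∑ x, |p x - q x| = θ₁ from by
            rw [hθ₁]; exact Finset.sum_congr rfl fun x _ => abs_sub_comm _ _]; exact hθ₁h)
    rw [show ∑ x, |p x - q x| = θ₁ from by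
        rw [hθ₁]; exact Finset.sum_congr rfl fun x _ => abs_sub_comm _ _, hdAB] at h1
    refine le_trans h1 (xlog_mono hθ₁0 hθ₁D hD₁half' hD₁pos hdAB2)
  have hEnt2 : (-∑ b, margB p b * Real.log (margB p b))
      - (-∑ b, margB q b * Real.log (margB q b)) ≤
      D₂.toReal * Real.log dB - D₂.toReal * Real.log (D₂.toReal) := by
    have h1 := Hn_diff hqB hpB (by positivity)
      (by rw [show ∑ b, |margB q b - margB p b| = θB from rfl]; exact hθBh)
    rw [show ∑ b, |margB q b - margB p b| = θB from rfl] at h1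
    refine le_trans h1 ?_
    rw [hdB]
    exact xlog_mono hθB0 hθBD (le_trans hD₂₁ hD₁half') hD₂pos hdB2
  -- final assembly
  have hABpos : (0:ℝ) < dA * dB := by nlinarith
  have hAB0 : (dA * dB) ≠ 0 := hABpos.ne'
  have hB0 : dB ≠ 0 := by intro e; rw [e] at hdB2; linarith
  have expand : condEntAB q - condEntAB p =
      (((-∑ x, q x * Real.log (q x)) - (-∑ x, p x * Real.log (p x))) +
        ((-∑ b, margB p b * Real.log (margB p b))
          - (-∑ b, margB q b * Real.log (margB q b)))) / Real.log 2 := by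
    rw [condEntAB, condEntAB, shannon_eq q, shannon_eq p, shannon_eq (margB q),
      shannon_eq (margB p)]
    ring
  have key := add_le_add hEnt1 hEnt2
  have rhs_eq : D₁.toReal * Real.logb 2 (dA * dB / D₁.toReal) +
      D₂.toReal * Real.logb 2 (dB / D₂.toReal) =
      ((D₁.toReal * Real.log (dA * dB) - D₁.toReal * Real.log (D₁.toReal)) +
        (D₂.toReal * Real.log dB - D₂.toReal * Real.log (D₂.toReal))) / Real.log 2 := by
    rw [Real.logb, Real.logb, Real.log_div hAB0 hD₁pos.ne', Real.log_div hB0 hD₂pos.ne']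
    ring
  rw [expand, rhs_eq]
  exact (div_le_div_iff_of_pos_right hlog2).mpr key
end

section
/- Let C, Y₁, …, Y_k be random variables taking values in finite nonempty sets with joint pmf p, and suppose that for every i ∈ {3, …, k} the variables Y_{1:i−2} and Y_i are conditionally independent given (C, Y_{i−1}) (i.e., the joint pmf factorizes accordingly). Then D( p_{Y_{1:k}} ‖ ∏_{i=1}^{k} p_{Y_i} ) ≤ ∑_{i=2}^{k} I( Y_i ; (Y_{i−1}, C) ). (Abstract form of Lemma 3 of the paper, establishing asymptotic independence across blocks from pairwise bounds.) -/
open scoped ENNReal BigOperators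

attribute [local instance] Classical.propDecidable

/-- The index `i − 1` in `Fin k` (meaningful when `1 ≤ (i : ℕ)`). -/
def prevIdx {k : ℕ} (i : Fin k) : Fin k :=
  ⟨(i : ℕ) - 1, Nat.lt_of_le_of_lt (Nat.sub_le _ _) i.isLt⟩

section Aux
variable {Ω : Type*} [Fintype Ω]

lemma pushforward_nonneg {β : Type*} [DecidableEq β] {p : Ω → ℝ} (hp : ∀ ω, 0 ≤ p ω)
    (f : Ω → β) (b : β) : 0 ≤ pushforward p f b :=
  Finset.sum_nonneg fun ω _ => by split <;> simp [hp ω]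

lemma le_pushforward {β : Type*} [DecidableEq β] {p : Ω → ℝ} (hp : ∀ ω, 0 ≤ p ω)
    (f : Ω → β) (ω : Ω) : p ω ≤ pushforward p f (f ω) := by
  have h := Finset.single_le_sum (f := fun ω' => if f ω' = f ω then p ω' else 0)
    (fun ω' _ => by split <;> simp [hp ω']) (Finset.mem_univ ω)
  simpa [pushforward] using h

lemma pushforward_eq_zero {β : Type*} [DecidableEq β] {p : Ω → ℝ} (hp : ∀ ω, 0 ≤ p ω)
    {f : Ω → β} {b : β} (h : pushforward p f b = 0) {ω : Ω} (hω : f ω = b) : p ω = 0 := by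
  have := (Finset.sum_eq_zero_iff_of_nonneg
    (fun ω' (_ : ω' ∈ Finset.univ) => by split <;> simp [hp ω'])).1 h ω (Finset.mem_univ ω)
  simpa [hω] using this

lemma sum_pushforward {β : Type*} [DecidableEq β] [Fintype β] (p : Ω → ℝ) (f : Ω → β) :
    ∑ b, pushforward p f b = ∑ ω, p ω := by
  unfold pushforward
  rw [Finset.sum_comm]
  simp

lemma pushforward_transfer {β : Type*} [DecidableEq β] [Fintype β] (p : Ω → ℝ) (f : Ω → β)
    (L : β → ℝ) : ∑ b, pushforward p f b * L b = ∑ ω, p ω * L (f ω) := by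
  unfold pushforward
  simp_rw [Finset.sum_mul]
  rw [Finset.sum_comm]
  refine Finset.sum_congr rfl fun ω _ => ?_
  simp [ite_mul, Finset.sum_ite_eq]

lemma pushforward_congr {β β' : Type*} [DecidableEq β] [DecidableEq β'] (p : Ω → ℝ)
    (f : Ω → β) (g : Ω → β') (ω : Ω) (h : ∀ ω', f ω' = f ω ↔ g ω' = g ω) :
    pushforward p f (f ω) = pushforward p g (g ω) :=
  Finset.sum_congr rfl fun ω' _ => if_congr (h ω') rfl rfl

lemma pushforward_fst {β γ' : Type*} [DecidableEq β] [DecidableEq γ'] [Fintype γ']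
    (p : Ω → ℝ) (g : Ω → γ') (f : Ω → β) (b : β) :
    ∑ c, pushforward p (fun ω => (g ω, f ω)) (c, b) = pushforward p f b := by
  unfold pushforward
  rw [Finset.sum_comm]
  refine Finset.sum_congr rfl fun ω _ => ?_
  simp [Prod.ext_iff, ite_and, Finset.sum_ite_eq]
end Aux

section Chain
variable {k : ℕ} {γ : Type*} {β : Fin k → Type*} [Fintype γ] [DecidableEq γ]
  [∀ i, Fintype (β i)] [∀ i, DecidableEq (β i)]

noncomputable def DtF (p : γ × ((i : Fin k) → β i) → ℝ) (i : Fin k)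
    (ω : γ × ((i : Fin k) → β i)) : ℝ :=
  pushforward p (fun ω' => (ω'.1, ω'.2 (prevIdx i))) (ω.1, ω.2 (prevIdx i))

noncomputable def EtF (p : γ × ((i : Fin k) → β i) → ℝ) (i : Fin k)
    (ω : γ × ((i : Fin k) → β i)) : ℝ :=
  pushforward p (fun ω' => (ω'.2 i, (ω'.1, ω'.2 (prevIdx i)))) (ω.2 i, (ω.1, ω.2 (prevIdx i)))

noncomputable def F0F (hk : 0 < k) (p : γ × ((i : Fin k) → β i) → ℝ)
    (ω : γ × ((i : Fin k) → β i)) : ℝ :=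
  pushforward p (fun ω' => (ω'.1, ω'.2 ⟨0, hk⟩)) (ω.1, ω.2 ⟨0, hk⟩)

noncomputable def PhiF (m : ℕ) (hm : m < k) (p : γ × ((i : Fin k) → β i) → ℝ)
    (ω : γ × ((i : Fin k) → β i)) : ℝ :=
  pushforward p (fun ω' => ((fun j : {j : Fin k // (j : ℕ) < m} => ω'.2 j),
      (ω'.1, ω'.2 ⟨m, hm⟩)))
    ((fun j : {j : Fin k // (j : ℕ) < m} => ω.2 j), (ω.1, ω.2 ⟨m, hm⟩))

lemma claimF (p : γ × ((i : Fin k) → β i) → ℝ)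
    (hMarkov : ∀ i : Fin k, 2 ≤ (i : ℕ) →
      ∀ (a : (j : {j : Fin k // (j : ℕ) < (i : ℕ) - 1}) → β j)
        (b : β i) (c : γ × β (prevIdx i)),
        pushforward p
            (fun ω => ((fun j : {j : Fin k // (j : ℕ) < (i : ℕ) - 1} => ω.2 j),
              ω.2 i, (ω.1, ω.2 (prevIdx i)))) (a, b, c) *
          pushforward p (fun ω => (ω.1, ω.2 (prevIdx i))) c =
        pushforward p
            (fun ω => ((fun j : {j : Fin k // (j : ℕ) < (i : ℕ) - 1} => ω.2 j),
              (ω.1, ω.2 (prevIdx i)))) (a, c) *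
          pushforward p (fun ω => (ω.2 i, (ω.1, ω.2 (prevIdx i)))) (b, c)) :
    ∀ (m : ℕ) (hm : m < k) (hk : 0 < k) (ω : γ × ((i : Fin k) → β i)),
      PhiF m hm p ω *
        ∏ i ∈ Finset.univ.filter (fun i : Fin k => 1 ≤ (i : ℕ) ∧ (i : ℕ) ≤ m), DtF p i ω =
      F0F hk p ω *
        ∏ i ∈ Finset.univ.filter (fun i : Fin k => 1 ≤ (i : ℕ) ∧ (i : ℕ) ≤ m), EtF p i ω := by
  intro m
  induction m with
  | zero =>
    intro hm hk ω
    have hfe : Finset.univ.filter (fun i : Fin k => 1 ≤ (i : ℕ) ∧ (i : ℕ) ≤ 0) = ∅ := by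
      ext i; simp; omega
    rw [hfe]
    simp only [Finset.prod_empty, mul_one]
    exact pushforward_congr p _ _ ω (fun ω' => by
      constructor
      · rintro h
        have := congrArg Prod.snd h
        simpa using this
      · intro h
        refine Prod.ext ?_ ?_
        · funext j; exact absurd j.2 (by omega)
        · simpa using h)
  | succ m ih =>
    intro hm1 hk ω
    have hmk : m < k := Nat.lt_of_succ_lt hm1
    set i1 : Fin k := ⟨m + 1, hm1⟩ with hi1
    have hfe : Finset.univ.filter (fun i : Fin k => 1 ≤ (i : ℕ) ∧ (i : ℕ) ≤ m + 1) =
        insert i1 (Finset.univ.filter (fun i : Fin k => 1 ≤ (i : ℕ) ∧ (i : ℕ) ≤ m)) := by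
      ext i; simp [hi1, Fin.ext_iff]; omega
    have hnotmem : i1 ∉ Finset.univ.filter (fun i : Fin k => 1 ≤ (i : ℕ) ∧ (i : ℕ) ≤ m) := by
      simp [hi1]
    have key : PhiF (m + 1) hm1 p ω * DtF p i1 ω = PhiF m hmk p ω * EtF p i1 ω := by
      rcases Nat.eq_zero_or_pos m with hm0 | hmpos
      · subst hm0
        have hprev : prevIdx i1 = (⟨0, hk⟩ : Fin k) := Fin.ext (by simp [hi1, prevIdx])
        -- Phi 1 = Et i1 and Dt i1 = F0-like = Phi 0 (up to congr)
        have h1 : PhiF 1 hm1 p ω = EtF p i1 ω := by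
          refine pushforward_congr p _ _ ω (fun ω' => ?_)
          simp only [Prod.mk.injEq, funext_iff, Subtype.forall]
          constructor
          · rintro ⟨ha, hb, hc⟩
            have h0 := ha ⟨0, hk⟩ (by norm_num)
            exact ⟨by simpa [hi1, prevIdx] using hc, hb, hprev ▸ h0⟩
          · rintro ⟨ha, hb, hc⟩
            refine ⟨?_, hb, by simpa [hi1, prevIdx] using ha⟩
            intro j hj
            have hj0 : j = (⟨0, hk⟩ : Fin k) := Fin.ext (by simp; omega)
            subst hj0
            exact hprev ▸ hc
        have h2 : DtF p i1 ω = PhiF 0 hmk p ω := by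
          refine pushforward_congr p _ _ ω (fun ω' => ?_)
          simp only [Prod.mk.injEq, funext_iff, Subtype.forall]
          constructor
          · rintro ⟨ha, hb⟩
            exact ⟨fun j hj => absurd hj (by omega), ha, hprev ▸ hb⟩
          · rintro ⟨_, ha, hb⟩
            exact ⟨ha, hprev ▸ hb⟩
        rw [h1, h2]; ring
      · have h2le : 2 ≤ (i1 : ℕ) := by simp [hi1]; omega
        have hprev : prevIdx i1 = (⟨m, hmk⟩ : Fin k) := Fin.ext (by simp [hi1, prevIdx])
        have hM := hMarkov i1 h2le (fun j => ω.2 j) (ω.2 i1) (ω.1, ω.2 (prevIdx i1))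
        have hT : pushforward p
            (fun ω' => ((fun j : {j : Fin k // (j : ℕ) < (i1 : ℕ) - 1} => ω'.2 j),
              ω'.2 i1, (ω'.1, ω'.2 (prevIdx i1))))
            ((fun j : {j : Fin k // (j : ℕ) < (i1 : ℕ) - 1} => ω.2 j),
              ω.2 i1, (ω.1, ω.2 (prevIdx i1))) = PhiF (m + 1) hm1 p ω := by
          refine pushforward_congr p _ _ ω (fun ω' => ?_)
          simp only [Prod.mk.injEq, funext_iff, Subtype.forall]
          constructor
          · rintro ⟨ha, hb, hc, hd⟩
            refine ⟨?_, hc, by simpa [hi1] using hb⟩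
            intro j hj
            rcases Nat.lt_or_ge (j : ℕ) m with h | h
            · exact ha j (by simpa [hi1] using h)
            · have : j = (⟨m, hmk⟩ : Fin k) := by ext; dsimp; omega
              subst this
              exact hprev ▸ hd
          · rintro ⟨ha, hb, hc⟩
            refine ⟨fun j hj => ha j (by simp [hi1] at hj ⊢; omega),
              by simpa [hi1] using hc, hb, ?_⟩
            have := ha ⟨m, hmk⟩ (by simp)
            exact hprev ▸ this
        have hU : pushforward p
            (fun ω' => ((fun j : {j : Fin k // (j : ℕ) < (i1 : ℕ) - 1} => ω'.2 j),
              (ω'.1, ω'.2 (prevIdx i1))))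
            ((fun j : {j : Fin k // (j : ℕ) < (i1 : ℕ) - 1} => ω.2 j),
              (ω.1, ω.2 (prevIdx i1))) = PhiF m hmk p ω := by
          refine pushforward_congr p _ _ ω (fun ω' => ?_)
          simp only [Prod.mk.injEq, funext_iff, Subtype.forall]
          constructor
          · rintro ⟨ha, hb, hc⟩
            exact ⟨fun j hj => ha j (by simpa [hi1] using hj), hb,
              hprev ▸ hc⟩
          · rintro ⟨ha, hb, hc⟩
            exact ⟨fun j hj => ha j (by simpa [hi1] using hj), hb,
              hprev ▸ hc⟩
        rw [hT, hU] at hM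
        exact hM
    rw [hfe, Finset.prod_insert hnotmem, Finset.prod_insert hnotmem,
      ← mul_assoc, key, mul_assoc, mul_comm (EtF p i1 ω), ← mul_assoc, ih hmk hk ω]
    ring

lemma starF (p : γ × ((i : Fin k) → β i) → ℝ)
    (hMarkov : ∀ i : Fin k, 2 ≤ (i : ℕ) →
      ∀ (a : (j : {j : Fin k // (j : ℕ) < (i : ℕ) - 1}) → β j)
        (b : β i) (c : γ × β (prevIdx i)),
        pushforward p
            (fun ω => ((fun j : {j : Fin k // (j : ℕ) < (i : ℕ) - 1} => ω.2 j),
              ω.2 i, (ω.1, ω.2 (prevIdx i)))) (a, b, c) *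
          pushforward p (fun ω => (ω.1, ω.2 (prevIdx i))) c =
        pushforward p
            (fun ω => ((fun j : {j : Fin k // (j : ℕ) < (i : ℕ) - 1} => ω.2 j),
              (ω.1, ω.2 (prevIdx i)))) (a, c) *
          pushforward p (fun ω => (ω.2 i, (ω.1, ω.2 (prevIdx i)))) (b, c))
    (hk : 0 < k) (ω : γ × ((i : Fin k) → β i)) :
    p ω * ∏ i ∈ Finset.univ.filter (fun i : Fin k => 1 ≤ (i : ℕ)), DtF p i ω =
      F0F hk p ω * ∏ i ∈ Finset.univ.filter (fun i : Fin k => 1 ≤ (i : ℕ)), EtF p i ω := by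
  have hm : k - 1 < k := Nat.sub_lt hk one_pos
  have h := claimF p hMarkov (k - 1) hm hk ω
  have hfe : Finset.univ.filter (fun i : Fin k => 1 ≤ (i : ℕ) ∧ (i : ℕ) ≤ k - 1) =
      Finset.univ.filter (fun i : Fin k => 1 ≤ (i : ℕ)) := by
    ext i
    have := i.isLt
    simp only [Finset.mem_filter, Finset.mem_univ, true_and]
    omega
  have hid : pushforward p (fun ω' => ω') ω = p ω := by
    simp [pushforward, Finset.sum_ite_eq']
  have hP : PhiF (k - 1) hm p ω = p ω := by
    rw [← hid]
    refine pushforward_congr p _ _ ω fun ω' => ?_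
    simp only [Prod.mk.injEq, funext_iff, Subtype.forall]
    constructor
    · rintro ⟨ha, hb, hc⟩
      refine Prod.ext hb (funext fun j => ?_)
      rcases Nat.lt_or_ge (j : ℕ) (k - 1) with hlt | hge
      · exact ha j hlt
      · have hj : j = (⟨k - 1, hm⟩ : Fin k) := Fin.ext (by have := j.isLt; simp; omega)
        rw [hj]; exact hc
    · rintro hh
      rw [hh]
      exact ⟨fun _ _ => rfl, rfl, rfl⟩
  rw [hfe, hP] at h
  exact h

end Chain


/-- Abstract form of Lemma 3: if for every (1-based) `i ∈ {3,…,k}` the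
variables `Y_{1:i−2}` and `Y_i` are conditionally independent given
`(C, Y_{i−1})`, then `D(p_{Y_{1:k}} ‖ ∏ᵢ p_{Y_i}) ≤ ∑_{i=2}^k I(Y_i ; (Y_{i−1}, C))`.
Indices are 0-based here: the conditional independence hypothesis is stated
for `i : Fin k` with `2 ≤ (i : ℕ)` (prefix `j < i − 1`), and the sum ranges
over `i` with `1 ≤ (i : ℕ)`; mutual information is
`I(A;B) = H(p_A) + H(p_B) − H(p_{AB})`. -/
theorem klDiv_blocks_le_sum_mutualInfo
    {k : ℕ} (hk : 1 ≤ k) (γ : Type*) (β : Fin k → Type*)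
    [Fintype γ] [DecidableEq γ] [Nonempty γ]
    [∀ i, Fintype (β i)] [∀ i, DecidableEq (β i)] [∀ i, Nonempty (β i)]
    (p : γ × ((i : Fin k) → β i) → ℝ) (hp : IsPMF p)
    (hMarkov : ∀ i : Fin k, 2 ≤ (i : ℕ) →
      ∀ (a : (j : {j : Fin k // (j : ℕ) < (i : ℕ) - 1}) → β j)
        (b : β i) (c : γ × β (prevIdx i)),
        pushforward p
            (fun ω => ((fun j : {j : Fin k // (j : ℕ) < (i : ℕ) - 1} => ω.2 j),
              ω.2 i, (ω.1, ω.2 (prevIdx i)))) (a, b, c) *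
          pushforward p (fun ω => (ω.1, ω.2 (prevIdx i))) c =
        pushforward p
            (fun ω => ((fun j : {j : Fin k // (j : ℕ) < (i : ℕ) - 1} => ω.2 j),
              (ω.1, ω.2 (prevIdx i)))) (a, c) *
          pushforward p (fun ω => (ω.2 i, (ω.1, ω.2 (prevIdx i)))) (b, c)) :
    klDiv (pushforward p (fun ω => ω.2))
        (fun y => ∏ i, pushforward p (fun ω => ω.2 i) (y i)) ≤
      ENNReal.ofReal (∑ i : Fin k, if 1 ≤ (i : ℕ) then
        (shannonEntropy (pushforward p (fun ω => ω.2 i)) +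
          shannonEntropy (pushforward p (fun ω => (ω.2 (prevIdx i), ω.1))) -
          shannonEntropy (pushforward p (fun ω => (ω.2 i, (ω.2 (prevIdx i), ω.1)))))
        else 0) := by
  obtain ⟨hp0, hp1⟩ := hp
  have hk0 : 0 < k := hk
  have hlog2 : (0:ℝ) < Real.log 2 := Real.log_pos one_lt_two
  -- absolute continuity
  have habs : ∀ y : (i : Fin k) → β i,
      (∏ i, pushforward p (fun ω => ω.2 i) (y i)) = 0 →
      pushforward p (fun ω => ω.2) y = 0 := by
    intro y h0
    obtain ⟨i, -, hB0⟩ := Finset.prod_eq_zero_iff.mp h0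
    show (∑ ω, if ω.2 = y then p ω else 0) = 0
    refine Finset.sum_eq_zero fun ω _ => ?_
    by_cases hωy : ω.2 = y
    · rw [if_pos hωy]
      exact pushforward_eq_zero hp0 hB0 (by rw [hωy])
    · rw [if_neg hωy]
  rw [klDiv, if_pos habs]
  refine ENNReal.ofReal_le_ofReal ?_
  -- restrict the sum on the right to indices `1 ≤ i`
  rw [← Finset.sum_filter]
  -- rewrite each mutual information as an expectation under `p`
  have step2 : ∀ i : Fin k,
      (shannonEntropy (pushforward p (fun ω => ω.2 i)) +
        shannonEntropy (pushforward p (fun ω => (ω.2 (prevIdx i), ω.1))) -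
        shannonEntropy (pushforward p (fun ω => (ω.2 i, (ω.2 (prevIdx i), ω.1))))) =
      ∑ ω, p ω * (Real.logb 2 (EtF p i ω) - Real.logb 2 (DtF p i ω) -
        Real.logb 2 (pushforward p (fun ω' => ω'.2 i) (ω.2 i))) := by
    intro i
    have hD : ∀ ω : γ × ((i : Fin k) → β i),
        pushforward p (fun ω' => (ω'.2 (prevIdx i), ω'.1)) (ω.2 (prevIdx i), ω.1) =
          DtF p i ω :=
      fun ω => pushforward_congr p _ _ ω (fun ω' => by
        simp only [Prod.mk.injEq]; tauto)
    have hE : ∀ ω : γ × ((i : Fin k) → β i),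
        pushforward p (fun ω' => (ω'.2 i, (ω'.2 (prevIdx i), ω'.1)))
          (ω.2 i, (ω.2 (prevIdx i), ω.1)) = EtF p i ω :=
      fun ω => pushforward_congr p _ _ ω (fun ω' => by
        simp only [Prod.mk.injEq]; tauto)
    simp only [shannonEntropy, pushforward_transfer]
    simp only [hD, hE]
    simp only [mul_sub]
    rw [Finset.sum_sub_distrib, Finset.sum_sub_distrib]
    ring
  rw [Finset.sum_congr rfl (fun i _ => step2 i), Finset.sum_comm]
  have step3 : ∀ ω : γ × ((i : Fin k) → β i),
      ∑ i ∈ Finset.univ.filter (fun i : Fin k => 1 ≤ (i : ℕ)),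
        p ω * (Real.logb 2 (EtF p i ω) - Real.logb 2 (DtF p i ω) -
          Real.logb 2 (pushforward p (fun ω' => ω'.2 i) (ω.2 i))) =
      p ω * ∑ i ∈ Finset.univ.filter (fun i : Fin k => 1 ≤ (i : ℕ)),
        (Real.logb 2 (EtF p i ω) - Real.logb 2 (DtF p i ω) -
          Real.logb 2 (pushforward p (fun ω' => ω'.2 i) (ω.2 i))) :=
    fun ω => (Finset.mul_sum _ _ _).symm
  rw [Finset.sum_congr rfl (fun ω _ => step3 ω)]
  rw [pushforward_transfer p (fun ω => ω.2)
    (fun y => Real.logb 2 (pushforward p (fun ω => ω.2) y /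
      ∏ i, pushforward p (fun ω => ω.2 i) (y i)))]
  -- the correction term
  set Q : γ × ((i : Fin k) → β i) → ℝ := fun ω =>
    pushforward p (fun ω' => ω'.2) ω.2 * F0F hk0 p ω /
      pushforward p (fun ω' => ω'.2 ⟨0, hk0⟩) (ω.2 ⟨0, hk0⟩) with hQdef
  have hQnn : ∀ ω, 0 ≤ Q ω := fun ω =>
    div_nonneg (mul_nonneg (pushforward_nonneg hp0 _ _) (pushforward_nonneg hp0 _ _))
      (pushforward_nonneg hp0 _ _)
  have hQ1 : ∑ ω, Q ω ≤ 1 := by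
    rw [Fintype.sum_prod_type_right]
    have hinner : ∀ y : (i : Fin k) → β i,
        ∑ c, Q (c, y) ≤ pushforward p (fun ω' => ω'.2) y := by
      intro y
      have hmarg : ∑ c, F0F hk0 p (c, y) =
          pushforward p (fun ω' => ω'.2 ⟨0, hk0⟩) (y ⟨0, hk0⟩) := by
        simpa [F0F] using
          pushforward_fst p (fun ω' => ω'.1) (fun ω' => ω'.2 (⟨0, hk0⟩ : Fin k)) (y ⟨0, hk0⟩)
      have hrw : ∑ c, Q (c, y) =
          pushforward p (fun ω' => ω'.2) y /
            pushforward p (fun ω' => ω'.2 ⟨0, hk0⟩) (y ⟨0, hk0⟩) *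
            ∑ c, F0F hk0 p (c, y) := by
        rw [Finset.mul_sum]
        exact Finset.sum_congr rfl fun c _ => by rw [hQdef]; ring
      rw [hrw, hmarg]
      rcases eq_or_ne (pushforward p (fun ω' => ω'.2 ⟨0, hk0⟩) (y ⟨0, hk0⟩)) 0 with h0 | h0
      · rw [h0, mul_zero]
        exact pushforward_nonneg hp0 _ _
      · rw [div_mul_cancel₀ _ h0]
    calc ∑ y, ∑ c, Q (c, y) ≤ ∑ y, pushforward p (fun ω' => ω'.2) y :=
          Finset.sum_le_sum fun y _ => hinner y
      _ = 1 := by rw [sum_pushforward p (fun ω => ω.2), hp1]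
  -- pointwise bound
  have hkey : ∀ ω : γ × ((i : Fin k) → β i),
      (p ω - Q ω) / Real.log 2 ≤
        p ω * (∑ i ∈ Finset.univ.filter (fun i : Fin k => 1 ≤ (i : ℕ)),
          (Real.logb 2 (EtF p i ω) - Real.logb 2 (DtF p i ω) -
            Real.logb 2 (pushforward p (fun ω' => ω'.2 i) (ω.2 i)))) -
        p ω * Real.logb 2 (pushforward p (fun ω => ω.2) ω.2 /
          ∏ i, pushforward p (fun ω => ω.2 i) (ω.2 i)) := by
    intro ω
    by_cases hpω : p ω = 0
    · rw [hpω, zero_mul, zero_mul, zero_sub, sub_zero, neg_div]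
      have := div_nonneg (hQnn ω) hlog2.le
      linarith
    · have hpos : 0 < p ω := lt_of_le_of_ne (hp0 ω) (Ne.symm hpω)
      have hA : 0 < pushforward p (fun ω' => ω'.2) ω.2 :=
        lt_of_lt_of_le hpos (le_pushforward hp0 (fun ω' => ω'.2) ω)
      have hB : ∀ i : Fin k, 0 < pushforward p (fun ω' => ω'.2 i) (ω.2 i) :=
        fun i => lt_of_lt_of_le hpos (le_pushforward hp0 (fun ω' => ω'.2 i) ω)
      have hD : ∀ i : Fin k, 0 < DtF p i ω :=
        fun i => lt_of_lt_of_le hpos (le_pushforward hp0 (fun ω' => (ω'.1, ω'.2 (prevIdx i))) ω)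
      have hE : ∀ i : Fin k, 0 < EtF p i ω :=
        fun i => lt_of_lt_of_le hpos
          (le_pushforward hp0 (fun ω' => (ω'.2 i, (ω'.1, ω'.2 (prevIdx i)))) ω)
      have hF : 0 < F0F hk0 p ω :=
        lt_of_lt_of_le hpos (le_pushforward hp0 (fun ω' => (ω'.1, ω'.2 ⟨0, hk0⟩)) ω)
      have hprodB : 0 < ∏ i, pushforward p (fun ω' => ω'.2 i) (ω.2 i) :=
        Finset.prod_pos fun i _ => hB i
      have hprodD : 0 < ∏ i ∈ Finset.univ.filter (fun i : Fin k => 1 ≤ (i : ℕ)), DtF p i ω :=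
        Finset.prod_pos fun i _ => hD i
      have hQpos : 0 < Q ω := by
        rw [hQdef]
        exact div_pos (mul_pos hA hF) (hB ⟨0, hk0⟩)
      -- identity for the KL integrand
      have eL : Real.logb 2 (pushforward p (fun ω' => ω'.2) ω.2 /
            ∏ i, pushforward p (fun ω' => ω'.2 i) (ω.2 i)) =
          Real.logb 2 (pushforward p (fun ω' => ω'.2) ω.2) -
            ∑ i, Real.logb 2 (pushforward p (fun ω' => ω'.2 i) (ω.2 i)) := by
        rw [Real.logb_div hA.ne' hprodB.ne',
          Real.logb_prod _ _ (fun i _ => (hB i).ne')]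
      have hc : Finset.univ.filter (fun i : Fin k => ¬ 1 ≤ (i : ℕ)) = {(⟨0, hk0⟩ : Fin k)} := by
        ext i
        simp only [Finset.mem_filter, Finset.mem_univ, true_and, Finset.mem_singleton,
          Fin.ext_iff]
        omega
      have hsplitB : ∑ i, Real.logb 2 (pushforward p (fun ω' => ω'.2 i) (ω.2 i)) =
          Real.logb 2 (pushforward p (fun ω' => ω'.2 ⟨0, hk0⟩) (ω.2 ⟨0, hk0⟩)) +
            ∑ i ∈ Finset.univ.filter (fun i : Fin k => 1 ≤ (i : ℕ)),
              Real.logb 2 (pushforward p (fun ω' => ω'.2 i) (ω.2 i)) := by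
        rw [← Finset.sum_filter_add_sum_filter_not Finset.univ (fun i : Fin k => 1 ≤ (i : ℕ)),
          hc, Finset.sum_singleton]
        ring
      have hstar := starF p hMarkov hk0 ω
      have hED : ∑ i ∈ Finset.univ.filter (fun i : Fin k => 1 ≤ (i : ℕ)),
            Real.logb 2 (EtF p i ω) -
          ∑ i ∈ Finset.univ.filter (fun i : Fin k => 1 ≤ (i : ℕ)),
            Real.logb 2 (DtF p i ω) =
          Real.logb 2 (p ω) - Real.logb 2 (F0F hk0 p ω) := by
        rw [← Real.logb_prod _ _ (fun i _ => (hE i).ne'),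
          ← Real.logb_prod _ _ (fun i _ => (hD i).ne')]
        have h1 : ∏ i ∈ Finset.univ.filter (fun i : Fin k => 1 ≤ (i : ℕ)), EtF p i ω =
            p ω * (∏ i ∈ Finset.univ.filter (fun i : Fin k => 1 ≤ (i : ℕ)), DtF p i ω) /
              F0F hk0 p ω := by
          rw [eq_div_iff hF.ne']
          linarith [hstar]
        rw [h1, Real.logb_div (mul_pos hpos hprodD).ne' hF.ne',
          Real.logb_mul hpos.ne' hprodD.ne']
        ring
      have eS : ∑ i ∈ Finset.univ.filter (fun i : Fin k => 1 ≤ (i : ℕ)),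
            (Real.logb 2 (EtF p i ω) - Real.logb 2 (DtF p i ω) -
              Real.logb 2 (pushforward p (fun ω' => ω'.2 i) (ω.2 i))) =
          Real.logb 2 (p ω) - Real.logb 2 (F0F hk0 p ω) -
            ∑ i ∈ Finset.univ.filter (fun i : Fin k => 1 ≤ (i : ℕ)),
              Real.logb 2 (pushforward p (fun ω' => ω'.2 i) (ω.2 i)) := by
        rw [Finset.sum_sub_distrib, Finset.sum_sub_distrib, hED]
      have hQlog : Real.log (Q ω) =
          Real.log (pushforward p (fun ω' => ω'.2) ω.2) + Real.log (F0F hk0 p ω) -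
            Real.log (pushforward p (fun ω' => ω'.2 ⟨0, hk0⟩) (ω.2 ⟨0, hk0⟩)) := by
        rw [hQdef]
        rw [Real.log_div (mul_pos hA hF).ne' (hB ⟨0, hk0⟩).ne', Real.log_mul hA.ne' hF.ne']
      have hlogle : Real.log (Q ω) - Real.log (p ω) ≤ Q ω / p ω - 1 := by
        have h := Real.log_le_sub_one_of_pos (div_pos hQpos hpos)
        rwa [Real.log_div hQpos.ne' hpos.ne'] at h
      have key2 : p ω - Q ω ≤ p ω * (Real.log (p ω) - Real.log (Q ω)) := by
        have h := mul_le_mul_of_nonneg_left hlogle hpos.le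
        have h4 : p ω * (Q ω / p ω - 1) = Q ω - p ω := by field_simp
        nlinarith [h]
      calc (p ω - Q ω) / Real.log 2 ≤
            p ω * (Real.log (p ω) - Real.log (Q ω)) / Real.log 2 :=
            (div_le_div_iff_of_pos_right hlog2).mpr key2
        _ = _ := by
            rw [eS, eL, hsplitB, hQlog]
            simp only [← Real.log_div_log]
            field_simp
            ring
  have hsum := Finset.sum_le_sum (fun ω (_ : ω ∈ Finset.univ) => hkey ω)
  rw [Finset.sum_sub_distrib] at hsum
  have h5 : 0 ≤ ∑ ω, (p ω - Q ω) / Real.log 2 := by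
    rw [← Finset.sum_div, Finset.sum_sub_distrib, hp1]
    apply div_nonneg _ hlog2.le
    linarith [hQ1]
  linarith [hsum, h5]
end

section
/- Let 𝒴 be a finite nonempty set, let q be a pmf on 𝒴 with q(y) > 0 for all y, let k, N ≥ 1, and let p be a pmf on (𝒴^N)^k with block marginals p₁, …, p_k on 𝒴^N. Suppose D( p ‖ ∏_{i=1}^k p_i ) ≤ a and D( q^{⊗N} ‖ p_i ) ≤ b for every i ∈ {1, …, k}, where a, b ≥ 0. Then D( p ‖ q^{⊗kN} ) ≤ kN · log₂(1/μ_q) · √(2 ln 2) · ( √a + √(k b) ), where μ_q = min_{y∈𝒴} q(y). (Abstract form of Lemma 4 of the paper, showing the target output distribution is approximated jointly over all blocks.) -/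
open scoped ENNReal BigOperators

attribute [local instance] Classical.propDecidable

section AuxLemmas
open Real Set
private noncomputable def phiAux : ℝ → ℝ :=
  fun x => Real.log x - 3/2 * ((x^2 + 4*x - 5)/(x+2)^2)

private noncomputable def hAux : ℝ → ℝ :=
  fun x => x * Real.log x - x + 1 - 3/2 * ((x-1)^2/(x+2))

private lemma phiAux_hasDeriv {t : ℝ} (ht : 0 < t) :
    HasDerivAt phiAux ((t-1)^2*(t+8)/(t*(t+2)^3)) t := by
  have h2 : t + 2 ≠ 0 := by positivity
  have hnum : HasDerivAt (fun x : ℝ => x^2 + 4*x - 5) (2*t + 4) t := by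
    have := ((hasDerivAt_pow 2 t).add ((hasDerivAt_id t).const_mul 4)).sub_const 5
    exact this.congr_deriv (by simp [id])
  have hden : HasDerivAt (fun x : ℝ => (x+2)^2) (2*(t+2)) t := by
    have := ((hasDerivAt_id t).add_const 2).pow 2
    exact this.congr_deriv (by simp [id])
  have hdiv : HasDerivAt (fun x : ℝ => (x^2 + 4*x - 5)/(x+2)^2)
      (((2*t+4)*(t+2)^2 - (t^2+4*t-5)*(2*(t+2)))/((t+2)^2)^2) t :=
    hnum.div hden (pow_ne_zero 2 h2)
  have hlog : HasDerivAt Real.log t⁻¹ t := Real.hasDerivAt_log (ne_of_gt ht)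
  have := hlog.sub (hdiv.const_mul (3/2 : ℝ))
  refine this.congr_deriv ?_
  field_simp
  ring

private lemma hAux_hasDeriv {t : ℝ} (ht : 0 < t) :
    HasDerivAt hAux (phiAux t) t := by
  have h2 : t + 2 ≠ 0 := by positivity
  have hnum : HasDerivAt (fun x : ℝ => (x-1)^2) (2*(t-1)) t := by
    have := ((hasDerivAt_id t).sub_const 1).pow 2
    exact this.congr_deriv (by simp [id])
  have hden : HasDerivAt (fun x : ℝ => x+2) 1 t := (hasDerivAt_id t).add_const 2
  have hdiv : HasDerivAt (fun x : ℝ => (x-1)^2/(x+2))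
      ((2*(t-1) * (t+2) - (t-1)^2 * 1) / (t+2)^2) t := hnum.div hden h2
  have hml : HasDerivAt (fun x : ℝ => x * Real.log x) (Real.log t + 1) t :=
    Real.hasDerivAt_mul_log (ne_of_gt ht)
  have := ((hml.sub (hasDerivAt_id t)).add_const 1).sub (hdiv.const_mul (3/2:ℝ))
  refine this.congr_deriv ?_
  unfold phiAux
  field_simp
  ring

private lemma phiAux_mono : MonotoneOn phiAux (Ioi (0:ℝ)) := by
  apply monotoneOn_of_deriv_nonneg (convex_Ioi 0)
  · intro t ht
    exact (phiAux_hasDeriv ht).differentiableAt.continuousAt.continuousWithinAt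
  · rw [interior_Ioi]
    exact fun t ht => (phiAux_hasDeriv ht).differentiableAt.differentiableWithinAt
  · rw [interior_Ioi]
    intro t ht
    rw [(phiAux_hasDeriv ht).deriv]
    have h1 : (0:ℝ) < t := ht
    positivity

private lemma phiAux_one : phiAux 1 = 0 := by
  unfold phiAux; norm_num

private lemma hAux_one : hAux 1 = 0 := by
  unfold hAux; norm_num

private lemma hAux_nonneg {x : ℝ} (hx : 0 ≤ x) : 0 ≤ hAux x := by
  rcases eq_or_lt_of_le hx with h|hx0
  · unfold hAux; rw [← h]; norm_num
  rcases le_or_gt 1 x with h1|h1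
  · -- monotone on Ici 1
    have mono : MonotoneOn hAux (Ici (1:ℝ)) := by
      apply monotoneOn_of_deriv_nonneg (convex_Ici 1)
      · intro t ht
        have : (0:ℝ) < t := lt_of_lt_of_le one_pos ht
        exact (hAux_hasDeriv this).differentiableAt.continuousAt.continuousWithinAt
      · rw [interior_Ici]
        exact fun t ht => (hAux_hasDeriv (lt_trans one_pos ht)).differentiableAt.differentiableWithinAt
      · rw [interior_Ici]
        intro t ht
        rw [(hAux_hasDeriv (lt_trans one_pos ht)).deriv]
        have := phiAux_mono (mem_Ioi.mpr one_pos) (mem_Ioi.mpr (lt_trans one_pos ht)) (le_of_lt ht)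
        rw [phiAux_one] at this
        exact this
    have := mono (mem_Ici.mpr le_rfl) (mem_Ici.mpr h1) h1
    rwa [hAux_one] at this
  · -- antitone on Icc x 1
    have anti : AntitoneOn hAux (Icc x 1) := by
      apply antitoneOn_of_deriv_nonpos (convex_Icc x 1)
      · intro t ht
        have : (0:ℝ) < t := lt_of_lt_of_le hx0 ht.1
        exact (hAux_hasDeriv this).differentiableAt.continuousAt.continuousWithinAt
      · rw [interior_Icc]
        exact fun t ht => (hAux_hasDeriv (lt_trans hx0 ht.1)).differentiableAt.differentiableWithinAt
      · rw [interior_Icc]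
        intro t ht
        rw [(hAux_hasDeriv (lt_trans hx0 ht.1)).deriv]
        have := phiAux_mono (mem_Ioi.mpr (lt_trans hx0 ht.1)) (mem_Ioi.mpr one_pos) (le_of_lt ht.2)
        rw [phiAux_one] at this
        exact this
    have := anti (mem_Icc.mpr ⟨le_rfl, le_of_lt h1⟩) (mem_Icc.mpr ⟨le_of_lt h1, le_rfl⟩) (le_of_lt h1)
    rwa [hAux_one] at this

private lemma pointwise_pinsker {p u : ℝ} (hp : 0 ≤ p) (hu : 0 < u) :
    3/2 * ((p-u)^2/(p+2*u)) ≤ p * Real.log (p/u) - p + u := by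
  have hx : 0 ≤ p/u := div_nonneg hp hu.le
  have hh := hAux_nonneg hx
  have hpu : 0 < p + 2*u := by linarith
  have key : p * Real.log (p/u) - p + u - 3/2*((p-u)^2/(p+2*u)) = u * hAux (p/u) := by
    unfold hAux
    rw [show (p/u) * Real.log (p/u) = Real.log (p/u) * (p/u) by ring]
    field_simp
  nlinarith [mul_nonneg hu.le hh]

private lemma pinsker_real {α : Type*} [Fintype α] (f g : α → ℝ)
    (hf : IsPMF f) (hg : IsPMF g) (hgpos : ∀ x, 0 < g x) :
    ∑ x, |f x - g x| ≤ Real.sqrt (2 * Real.log 2 * ∑ x, f x * Real.logb 2 (f x / g x)) := by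
  classical
  set Dn := ∑ x, f x * Real.log (f x / g x) with hDn_def
  have hsum3 : ∑ x, (f x + 2*g x) = 3 := by
    rw [Finset.sum_add_distrib, ← Finset.mul_sum, hf.2, hg.2]; norm_num
  have hq : ∀ x : α, 0 < f x + 2 * g x := fun x => by
    have := hf.1 x; have := hgpos x; linarith
  have hDn : 3/2 * ∑ x, ((f x - g x)^2/(f x + 2*g x)) ≤ Dn := by
    have h2 := Finset.sum_le_sum (fun x (_ : x ∈ Finset.univ) =>
      pointwise_pinsker (hf.1 x) (hgpos x))
    have h3 : ∑ x, (f x * Real.log (f x/g x) - f x + g x) = Dn := by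
      rw [Finset.sum_add_distrib, Finset.sum_sub_distrib, hf.2, hg.2]; ring
    calc 3/2 * ∑ x, ((f x - g x)^2/(f x + 2*g x))
        = ∑ x, 3/2 * ((f x - g x)^2/(f x + 2*g x)) := by rw [Finset.mul_sum]
      _ ≤ ∑ x, (f x * Real.log (f x/g x) - f x + g x) := h2
      _ = Dn := h3
  have cs := Finset.sum_mul_sq_le_sq_mul_sq Finset.univ
      (fun x => |f x - g x|/Real.sqrt (f x + 2*g x))
      (fun x => Real.sqrt (f x + 2*g x))
  have e1 : ∀ x : α, |f x - g x|/Real.sqrt (f x + 2*g x) * Real.sqrt (f x + 2*g x)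
      = |f x - g x| := fun x =>
    div_mul_cancel₀ _ (ne_of_gt (Real.sqrt_pos.mpr (hq x)))
  have e2 : ∀ x : α, (|f x - g x|/Real.sqrt (f x + 2*g x))^2
      = (f x - g x)^2/(f x + 2*g x) := fun x => by
    rw [div_pow, sq_abs, Real.sq_sqrt (hq x).le]
  have e3 : ∀ x : α, (Real.sqrt (f x + 2*g x))^2 = f x + 2*g x := fun x =>
    Real.sq_sqrt (hq x).le
  simp only [e1] at cs
  rw [Finset.sum_congr rfl (fun x _ => e2 x), Finset.sum_congr rfl (fun x _ => e3 x),
    hsum3] at cs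
  -- cs : (∑ |f-g|)^2 ≤ (∑ (f-g)^2/(f+2g)) * 3
  have hS2 : (∑ x, |f x - g x|)^2 ≤ 2 * Dn := by nlinarith
  have hlog2 : Real.log 2 ≠ 0 := ne_of_gt (Real.log_pos (by norm_num))
  have hconv : Real.log 2 * ∑ x, f x * Real.logb 2 (f x / g x) = Dn := by
    rw [Finset.mul_sum]
    refine Finset.sum_congr rfl (fun x _ => ?_)
    rw [Real.logb]
    field_simp
  have hy : 0 ≤ 2 * Real.log 2 * ∑ x, f x * Real.logb 2 (f x / g x) := by
    have : (0:ℝ) ≤ (∑ x, |f x - g x|)^2 := sq_nonneg _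
    nlinarith
  rw [Real.le_sqrt (Finset.sum_nonneg (fun x _ => abs_nonneg _)) hy]
  nlinarith


private lemma pointwise_rev {p u μ : ℝ} (hp0 : 0 ≤ p) (hp1 : p ≤ 1) (hu1 : u ≤ 1)
    (hμ0 : 0 < μ) (hμh : μ ≤ 1/2) (hμu : μ ≤ u) :
    p * Real.log (p/u) ≤ Real.log μ⁻¹ * (|p - u| + (p - u)) := by
  have hu0 : 0 < u := lt_of_lt_of_le hμ0 hμu
  have hμ1 : μ ≤ 1 := by linarith
  have hL : 0 ≤ Real.log μ⁻¹ := by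
    rw [Real.log_inv]
    simp only [Left.nonneg_neg_iff]
    exact Real.log_nonpos hμ0.le hμ1
  rcases le_or_gt p u with hle|hlt
  · have habs : |p - u| = -(p - u) := abs_of_nonpos (by linarith)
    rw [habs]
    have hRHS : Real.log μ⁻¹ * (-(p - u) + (p - u)) = 0 := by ring
    rw [hRHS]
    rcases eq_or_lt_of_le hp0 with h0|hp0'
    · rw [← h0]; simp
    · have : Real.log (p/u) ≤ 0 :=
        Real.log_nonpos (by positivity) ((div_le_one hu0).mpr hle)
      exact mul_nonpos_of_nonneg_of_nonpos hp0 this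
  · -- u < p ≤ 1, so u < 1
    have hu1' : u < 1 := lt_of_lt_of_le hlt hp1
    have hp0' : 0 < p := lt_trans hu0 hlt
    have habs : |p - u| = p - u := abs_of_pos (by linarith)
    have h1u : (0:ℝ) < 1 - u := by linarith
    have h1μ : (0:ℝ) < 1 - μ := by linarith
    have h1u' : (1:ℝ) - u ≠ 0 := ne_of_gt h1u
    have h1μ' : (1:ℝ) - μ ≠ 0 := ne_of_gt h1μ
    rw [habs, Real.log_div (ne_of_gt hp0') (ne_of_gt hu0), Real.log_inv]
    set lp := Real.log p
    set lu := Real.log u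
    set lm := Real.log μ
    -- convexity of x log x : p log p ≤ θ (u log u), θ = (1-p)/(1-u)
    have hθ0 : (0:ℝ) ≤ (1-p)/(1-u) := div_nonneg (by linarith) (by linarith)
    have hθ1 : (0:ℝ) ≤ 1 - (1-p)/(1-u) := by
      rw [sub_nonneg, div_le_one (by linarith)]; linarith
    have hconv := Real.convexOn_mul_log.2 (Set.mem_Ici.mpr hu0.le)
      (Set.mem_Ici.mpr (zero_le_one)) hθ0 hθ1 (by ring)
    simp only [smul_eq_mul, Real.log_one, mul_zero, mul_one, add_zero] at hconv
    have hcomb : (1-p)/(1-u) * u + (1 - (1-p)/(1-u)) = p := by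
      field_simp
      ring
    rw [hcomb] at hconv
    -- hconv : p * lp ≤ (1-p)/(1-u) * (u * lu) + (1 - (1-p)/(1-u)) * 0? check
    have hA : (1-u) * (p * lp) ≤ (1-p) * (u * lu) := by
      have := mul_le_mul_of_nonneg_left hconv h1u.le
      calc (1-u) * (p * lp) ≤ (1-u) * ((1-p)/(1-u) * (u * lu)) := this
        _ = (1-p) * (u * lu) := by field_simp
    -- concavity of log : (1-μ) lu ≥ (1-u) lm
    have hθ'0 : (0:ℝ) ≤ (1-u)/(1-μ) := div_nonneg (by linarith) (by linarith)
    have hθ'1 : (0:ℝ) ≤ 1 - (1-u)/(1-μ) := by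
      rw [sub_nonneg, div_le_one (by linarith)]; linarith
    have hconc := strictConcaveOn_log_Ioi.concaveOn.2 (Set.mem_Ioi.mpr hμ0)
      (Set.mem_Ioi.mpr zero_lt_one) hθ'0 hθ'1 (by ring)
    simp only [smul_eq_mul, Real.log_one, mul_zero, mul_one, add_zero] at hconc
    have hcomb' : (1-u)/(1-μ) * μ + (1 - (1-u)/(1-μ)) = u := by
      field_simp
      ring
    rw [hcomb'] at hconc
    -- hconc : (1-u)/(1-μ) * lm ≤ lu
    have hB : (1-u) * lm ≤ (1-μ) * lu := by
      have := mul_le_mul_of_nonneg_left hconc h1μ.le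
      calc (1-u) * lm = (1-μ) * ((1-u)/(1-μ) * lm) := by field_simp
        _ ≤ (1-μ) * lu := this
  -- now conclude by nlinarith
    have hlm : lm ≤ 0 := Real.log_nonpos hμ0.le hμ1
    have hd : (0:ℝ) < p - u := by linarith
    nlinarith [mul_le_mul_of_nonneg_left hA h1μ.le,
      mul_le_mul_of_nonneg_left hB (mul_nonneg hd.le h1μ.le),
      mul_nonneg (mul_nonneg hd.le h1u.le) (neg_nonneg.mpr hlm),
      mul_pos h1u h1μ]

private lemma rev_real {α : Type*} [Fintype α] (p u : α → ℝ)
    (hp : IsPMF p) (hu : IsPMF u) (μ : ℝ) (hμ0 : 0 < μ) (hμh : μ ≤ 1/2)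
    (hμu : ∀ x, μ ≤ u x) :
    ∑ x, p x * Real.logb 2 (p x / u x) ≤ Real.logb 2 μ⁻¹ * ∑ x, |p x - u x| := by
  have hp1 : ∀ x, p x ≤ 1 := fun x => by
    rw [← hp.2]; exact Finset.single_le_sum (fun i _ => hp.1 i) (Finset.mem_univ x)
  have hu1 : ∀ x, u x ≤ 1 := fun x => by
    rw [← hu.2]; exact Finset.single_le_sum (fun i _ => hu.1 i) (Finset.mem_univ x)
  have hlog2 : (0:ℝ) < Real.log 2 := Real.log_pos (by norm_num)
  have key : ∑ x, p x * Real.log (p x / u x) ≤ Real.log μ⁻¹ * ∑ x, |p x - u x| := by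
    have h1 := Finset.sum_le_sum (fun x (_ : x ∈ Finset.univ) =>
      pointwise_rev (hp.1 x) (hp1 x) (hu1 x) hμ0 hμh (hμu x))
    have h2 : ∑ x, Real.log μ⁻¹ * (|p x - u x| + (p x - u x))
        = Real.log μ⁻¹ * ∑ x, |p x - u x| := by
      rw [← Finset.mul_sum, Finset.sum_add_distrib, Finset.sum_sub_distrib, hp.2, hu.2]
      ring
    rw [← h2]; exact h1
  have lhs_eq : ∑ x, p x * Real.logb 2 (p x / u x)
      = (∑ x, p x * Real.log (p x / u x)) / Real.log 2 := by
    rw [Finset.sum_div]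
    exact Finset.sum_congr rfl (fun x _ => by rw [← Real.log_div_log, mul_div_assoc])
  have rhs_eq : Real.logb 2 μ⁻¹ * ∑ x, |p x - u x|
      = (Real.log μ⁻¹ * ∑ x, |p x - u x|) / Real.log 2 := by
    rw [← Real.log_div_log]; ring
  rw [lhs_eq, rhs_eq]
  gcongr

private lemma sum_pi_prod {k : ℕ} {β : Type*} [Fintype β] (f : Fin k → β → ℝ) :
    ∑ ω : Fin k → β, ∏ i, f i (ω i) = ∏ i, ∑ y, f i y := by
  classical
  rw [Finset.prod_univ_sum, Fintype.piFinset_univ]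

private lemma tensorize {k : ℕ} {β : Type*} [Fintype β]
    (Q : β → ℝ) (P : Fin k → β → ℝ) (hQ : IsPMF Q) (hQpos : ∀ y, 0 < Q y)
    (hPpos : ∀ i y, 0 < P i y) :
    ∑ ω : Fin k → β, (∏ i, Q (ω i)) * Real.logb 2 ((∏ i, Q (ω i)) / ∏ i, P i (ω i))
      = ∑ i, ∑ y, Q y * Real.logb 2 (Q y / P i y) := by
  classical
  have step1 : ∀ ω : Fin k → β,
      (∏ i, Q (ω i)) * Real.logb 2 ((∏ i, Q (ω i)) / ∏ i, P i (ω i))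
      = ∑ i, (∏ i', Q (ω i')) * Real.logb 2 (Q (ω i) / P i (ω i)) := by
    intro ω
    rw [← Finset.prod_div_distrib, Real.logb_prod _ _
      (fun i _ => by have := hQpos (ω i); have := hPpos i (ω i); positivity),
      Finset.mul_sum]
  rw [Finset.sum_congr rfl (fun ω _ => step1 ω), Finset.sum_comm]
  refine Finset.sum_congr rfl (fun i _ => ?_)
  have step2' : ∀ (ω : Fin k → β) (i' : Fin k),
      Q (ω i') * (if i' = i then Real.logb 2 (Q (ω i') / P i (ω i')) else 1)
      = (fun i' (y : β) => Q y * if i' = i then Real.logb 2 (Q y / P i y) else 1) i' (ω i') := by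
    intro ω i'; rfl
  have step2 : ∀ ω : Fin k → β,
      (∏ i', Q (ω i')) * Real.logb 2 (Q (ω i) / P i (ω i))
      = ∏ i', (Q (ω i') * (if i' = i then Real.logb 2 (Q (ω i') / P i (ω i')) else 1)) := by
    intro ω
    rw [Finset.prod_mul_distrib, Finset.prod_ite_eq' Finset.univ i
      (fun i' => Real.logb 2 (Q (ω i') / P i (ω i')))]
    simp
  have step3 : ∀ i' : Fin k,
      (∑ y, Q y * (if i' = i then Real.logb 2 (Q y / P i y) else 1))
      = if i' = i then ∑ y, Q y * Real.logb 2 (Q y / P i y) else 1 := by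
    intro i'
    by_cases h : i' = i <;> simp [h, hQ.2]
  calc (∑ ω : Fin k → β, (∏ i', Q (ω i')) * Real.logb 2 (Q (ω i) / P i (ω i)))
      = ∑ ω : Fin k → β, ∏ i', (fun i' (y : β) => Q y * if i' = i then Real.logb 2 (Q y / P i y) else 1) i' (ω i') := by
        exact Finset.sum_congr rfl (fun ω _ => (step2 ω).trans
          (Finset.prod_congr rfl (fun i' _ => (step2' ω i'))))
    _ = ∏ i', ∑ y, Q y * (if i' = i then Real.logb 2 (Q y / P i y) else 1) :=
        sum_pi_prod (fun i' (y : β) => Q y * if i' = i then Real.logb 2 (Q y / P i y) else 1)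
    _ = ∏ i', (if i' = i then ∑ y, Q y * Real.logb 2 (Q y / P i y) else 1) :=
        Finset.prod_congr rfl (fun i' _ => step3 i')
    _ = ∑ y, Q y * Real.logb 2 (Q y / P i y) := by
        rw [Finset.prod_ite_eq' Finset.univ i
          (fun _ => ∑ y, Q y * Real.logb 2 (Q y / P i y))]
        simp

end AuxLemmas

section Main
open Real Set

/-- Abstract form of Lemma 4: if `D(p‖∏ᵢ pᵢ) ≤ a` and `D(q^{⊗N}‖pᵢ) ≤ b`
for all block marginals `pᵢ` of a pmf `p` on `(𝒴^N)^k`, then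
`D(p‖q^{⊗kN}) ≤ kN · log₂(1/μ_q) · √(2 ln 2) · (√a + √(kb))`. -/
theorem klDiv_all_blocks_le
    {𝒴 : Type*} [Fintype 𝒴] [DecidableEq 𝒴] [Nonempty 𝒴]
    {k N : ℕ} (hk : 1 ≤ k) (hN : 1 ≤ N)
    (q : 𝒴 → ℝ) (hq : IsPMF q) (hqpos : ∀ y, 0 < q y)
    (p : (Fin k → Fin N → 𝒴) → ℝ) (hp : IsPMF p)
    (a b : ℝ) (ha : 0 ≤ a) (hb : 0 ≤ b)
    (hblocks : klDiv p
        (fun ω => ∏ i, pushforward p (fun ν => ν i) (ω i)) ≤ ENNReal.ofReal a)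
    (hmarg : ∀ i : Fin k,
      klDiv (fun y : Fin N → 𝒴 => ∏ j, q (y j)) (pushforward p (fun ν => ν i)) ≤
        ENNReal.ofReal b) :
    klDiv p (fun ω => ∏ i, ∏ j, q (ω i j)) ≤
      ENNReal.ofReal
        ((k : ℝ) * (N : ℝ) *
          Real.logb 2 ((Finset.univ.inf' Finset.univ_nonempty q)⁻¹) *
          Real.sqrt (2 * Real.log 2) *
          (Real.sqrt a + Real.sqrt ((k : ℝ) * b))) := by
  classical
  set μ : ℝ := Finset.univ.inf' Finset.univ_nonempty q with hμdef
  have hμle : ∀ y, μ ≤ q y := fun y => Finset.inf'_le q (Finset.mem_univ y)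
  have hμpos : 0 < μ := by
    obtain ⟨y₀, _, hy₀⟩ := Finset.exists_mem_eq_inf' Finset.univ_nonempty q
    rw [hμdef, hy₀]; exact hqpos y₀
  -- notation
  set Q : (Fin N → 𝒴) → ℝ := fun y => ∏ j, q (y j) with hQdef
  set P : Fin k → (Fin N → 𝒴) → ℝ := fun i => pushforward p (fun ν => ν i) with hPdef
  set r : (Fin k → Fin N → 𝒴) → ℝ := fun ω => ∏ i, P i (ω i) with hrdef
  set u : (Fin k → Fin N → 𝒴) → ℝ := fun ω => ∏ i, ∏ j, q (ω i j) with hudef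
  have hQpos : ∀ y, 0 < Q y := fun y => Finset.prod_pos (fun j _ => hqpos (y j))
  have hQ : IsPMF Q := by
    constructor
    · exact fun y => (hQpos y).le
    · have := sum_pi_prod (fun (_ : Fin N) => q)
      rw [hQdef]
      rw [this]  -- may need adjusting
      rw [Finset.prod_congr rfl (fun j _ => hq.2)]
      simp
  have hupos : ∀ ω, 0 < u ω :=
    fun ω => Finset.prod_pos (fun i _ => Finset.prod_pos (fun j _ => hqpos (ω i j)))
  have huQ : ∀ ω, u ω = ∏ i, Q (ω i) := fun ω => rfl
  have hu : IsPMF u := by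
    constructor
    · exact fun ω => (hupos ω).le
    · rw [show (∑ ω, u ω) = ∑ ω : Fin k → Fin N → 𝒴, ∏ i, Q (ω i) from
        Finset.sum_congr rfl (fun ω _ => huQ ω)]
      rw [sum_pi_prod (fun (_ : Fin k) => Q)]
      rw [Finset.prod_congr rfl (fun i _ => hQ.2)]
      simp
  have hP : ∀ i, IsPMF (P i) := by
    intro i
    constructor
    · intro y
      apply Finset.sum_nonneg
      intro ω _
      split
      · exact hp.1 ω
      · exact le_refl 0
    · rw [hPdef]
      unfold pushforward
      rw [Finset.sum_comm]
      rw [Finset.sum_congr rfl (fun ω _ => Finset.sum_ite_eq Finset.univ (ω i) (fun _ => p ω))]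
      simpa using hp.2
  have hPpos : ∀ i y, 0 < P i y := by
    intro i y
    rcases eq_or_lt_of_le ((hP i).1 y) with h0|h; swap
    · exact h
    exfalso
    have hne : ¬ (∀ y', P i y' = 0 → Q y' = 0) := by
      push_neg
      exact ⟨y, h0.symm, ne_of_gt (hQpos y)⟩
    have := hmarg i
    unfold klDiv at this
    rw [if_neg hne] at this
    exact ENNReal.ofReal_ne_top (top_le_iff.mp this)
  have hrpos : ∀ ω, 0 < r ω := fun ω => Finset.prod_pos (fun i _ => hPpos i (ω i))
  have hr : IsPMF r := by
    constructor
    · exact fun ω => (hrpos ω).le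
    · rw [hrdef, sum_pi_prod P, Finset.prod_congr rfl (fun i _ => (hP i).2)]
      simp
  -- real KL bounds
  have hlog2 : (0:ℝ) < Real.log 2 := Real.log_pos (by norm_num)
  have hDpr : ∑ ω, p ω * Real.logb 2 (p ω / r ω) ≤ a := by
    have := hblocks
    unfold klDiv at this
    rw [if_pos (fun ω h0 => absurd h0 (ne_of_gt (hrpos ω)))] at this
    exact (ENNReal.ofReal_le_ofReal_iff ha).mp this
  have hDQP : ∀ i, ∑ y, Q y * Real.logb 2 (Q y / P i y) ≤ b := by
    intro i
    have := hmarg i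
    unfold klDiv at this
    rw [if_pos (fun y h0 => absurd h0 (ne_of_gt (hPpos i y)))] at this
    exact (ENNReal.ofReal_le_ofReal_iff hb).mp this
  have hDur : ∑ ω, u ω * Real.logb 2 (u ω / r ω) ≤ (k:ℝ) * b := by
    have heq : ∑ ω, u ω * Real.logb 2 (u ω / r ω)
        = ∑ i, ∑ y, Q y * Real.logb 2 (Q y / P i y) := by
      rw [show (∑ ω, u ω * Real.logb 2 (u ω / r ω))
          = ∑ ω : Fin k → Fin N → 𝒴, (∏ i, Q (ω i)) *
            Real.logb 2 ((∏ i, Q (ω i)) / ∏ i, P i (ω i)) from rfl]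
      exact tensorize Q P hQ hQpos hPpos
    rw [heq]
    calc ∑ i, ∑ y, Q y * Real.logb 2 (Q y / P i y) ≤ ∑ _i : Fin k, b :=
          Finset.sum_le_sum (fun i _ => hDQP i)
      _ = (k:ℝ) * b := by simp [mul_comm]
  -- Pinsker bounds
  have hpin1 : ∑ ω, |p ω - r ω| ≤ Real.sqrt (2 * Real.log 2 * a) := by
    refine (pinsker_real p r hp hr hrpos).trans ?_
    apply Real.sqrt_le_sqrt
    have h2l : (0:ℝ) ≤ 2 * Real.log 2 := by positivity
    exact mul_le_mul_of_nonneg_left hDpr h2l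
  have hpin2 : ∑ ω, |u ω - r ω| ≤ Real.sqrt (2 * Real.log 2 * ((k:ℝ)*b)) := by
    refine (pinsker_real u r hu hr hrpos).trans ?_
    apply Real.sqrt_le_sqrt
    have h2l : (0:ℝ) ≤ 2 * Real.log 2 := by positivity
    exact mul_le_mul_of_nonneg_left hDur h2l
  have hple1 : ∀ ω, p ω ≤ 1 := fun ω => by
    rw [← hp.2]; exact Finset.single_le_sum (fun i _ => hp.1 i) (Finset.mem_univ ω)
  by_cases hcard : ∃ y₁ y₂ : 𝒴, y₁ ≠ y₂
  · -- at least two elements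
    obtain ⟨y₁, y₂, hy12⟩ := hcard
    have hμhalf : μ ≤ 1/2 := by
      have hpair : q y₁ + q y₂ ≤ ∑ y, q y := by
        rw [← Finset.sum_pair hy12]
        apply Finset.sum_le_sum_of_subset_of_nonneg
        · intro z _; exact Finset.mem_univ z
        · intro z _ _; exact (hqpos z).le
      have h1 := hμle y₁
      have h2 := hμle y₂
      rw [hq.2] at hpair
      linarith
    set μ' : ℝ := μ^(k*N) with hμ'def
    have hμ'pos : 0 < μ' := pow_pos hμpos _
    have hμ'half : μ' ≤ 1/2 := by
      have hkN : 1 ≤ k*N := Nat.mul_le_mul hk hN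
      have h1 : μ' ≤ μ^1 := pow_le_pow_of_le_one hμpos.le (by linarith) hkN
      rw [pow_one] at h1; linarith
    have hμ'le : ∀ ω, μ' ≤ u ω := by
      intro ω
      calc μ' = ∏ _i : Fin k, ∏ _j : Fin N, μ := by
            rw [Finset.prod_const, Finset.prod_const, ← pow_mul, hμ'def]
            simp [Finset.card_univ, Nat.mul_comm]
        _ ≤ ∏ i, ∏ j, q (ω i j) :=
            Finset.prod_le_prod (fun i _ => Finset.prod_nonneg (fun j _ => hμpos.le))
              (fun i _ => Finset.prod_le_prod (fun j _ => hμpos.le) (fun j _ => hμle _))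
        _ = u ω := rfl
    have hrev := rev_real p u hp hu μ' hμ'pos hμ'half hμ'le
    have hlogμ' : Real.logb 2 μ'⁻¹ = (k:ℝ) * (N:ℝ) * Real.logb 2 μ⁻¹ := by
      rw [hμ'def, ← inv_pow, Real.logb_pow]; push_cast; ring
    have hLnonneg : 0 ≤ Real.logb 2 μ⁻¹ := by
      apply Real.logb_nonneg one_lt_two
      rw [le_inv_comm₀ one_pos hμpos]
      linarith
    have htri : ∑ ω, |p ω - u ω|
        ≤ Real.sqrt (2*Real.log 2*a) + Real.sqrt (2*Real.log 2*((k:ℝ)*b)) := by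
      calc ∑ ω, |p ω - u ω| ≤ ∑ ω, (|p ω - r ω| + |u ω - r ω|) := by
            apply Finset.sum_le_sum
            intro ω _
            rw [show p ω - u ω = (p ω - r ω) - (u ω - r ω) by ring]
            exact abs_sub _ _
        _ = (∑ ω, |p ω - r ω|) + ∑ ω, |u ω - r ω| := Finset.sum_add_distrib
        _ ≤ _ := add_le_add hpin1 hpin2
    unfold klDiv
    rw [if_pos (fun ω h0 => absurd h0 (ne_of_gt (hupos ω)))]
    apply ENNReal.ofReal_le_ofReal
    calc ∑ ω, p ω * Real.logb 2 (p ω / u ω)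
        ≤ Real.logb 2 μ'⁻¹ * ∑ ω, |p ω - u ω| := hrev
      _ ≤ Real.logb 2 μ'⁻¹ *
          (Real.sqrt (2*Real.log 2*a) + Real.sqrt (2*Real.log 2*((k:ℝ)*b))) := by
          apply mul_le_mul_of_nonneg_left htri
          rw [hlogμ']; positivity
      _ = (k:ℝ)*(N:ℝ)*Real.logb 2 μ⁻¹ * Real.sqrt (2*Real.log 2) *
          (Real.sqrt a + Real.sqrt ((k:ℝ)*b)) := by
          rw [hlogμ', Real.sqrt_mul (by positivity : (0:ℝ) ≤ 2*Real.log 2) a,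
            Real.sqrt_mul (by positivity : (0:ℝ) ≤ 2*Real.log 2) ((k:ℝ)*b)]
          ring
  · -- essentially one element: q ≡ 1, u ≡ 1
    push_neg at hcard
    have hq1 : ∀ y, q y = 1 := by
      intro y
      have hsum : ∑ y', q y' = q y := by
        apply Finset.sum_eq_single_of_mem y (Finset.mem_univ y)
        intro y' _ hne
        exact absurd (hcard y' y) hne
      rw [← hsum]
      exact hq.2
    have hu1 : ∀ ω, u ω = 1 := fun ω => by simp [hudef, hq1]
    unfold klDiv
    rw [if_pos (fun ω h0 => absurd h0 (ne_of_gt (hupos ω)))]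
    have hsum0 : ∑ ω, p ω * Real.logb 2 (p ω / u ω) ≤ 0 := by
      apply Finset.sum_nonpos
      intro ω _
      rw [hu1 ω, div_one]
      rcases eq_or_lt_of_le (hp.1 ω) with h0|h0
      · rw [← h0]; simp
      · exact mul_nonpos_of_nonneg_of_nonpos (hp.1 ω)
          (Real.logb_nonpos one_lt_two (hp.1 ω) (hple1 ω))
    rw [ENNReal.ofReal_eq_zero.mpr hsum0]
    exact zero_le'

end Main
end

section
/- Let 𝒱, 𝒳, 𝒴 be finite nonempty sets and let p and q be pmfs on 𝒱 × 𝒳 × 𝒴 such that q(v,x,y) > 0 for all (v,x,y) and both p and q satisfy the Markov chain X − V − Y, i.e., p(v,x,y) · p_V(v) = p_{VX}(v,x) · p_{VY}(v,y) for all (v,x,y), and similarly for q. Then D(p ‖ q) ≤ log₂(1/μ_q) · √(2 ln 2) · [ √(D(q_{VX} ‖ p_{VX})) + √(D(q_V ‖ p_V)) + √(D(q_{VY} ‖ p_{VY})) ], where μ_q = min_{(v,x,y)} q(v,x,y). (Abstract single-letter form of the first chain of inequalities, Eq. (2), in the proof of Lemma 9 of the paper.) -/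
open scoped ENNReal BigOperators

attribute [local instance] Classical.propDecidable

/-- `V`-marginal of a joint pmf on `𝒱 × 𝒳 × 𝒴`. -/
noncomputable def margV3 {𝒱 𝒳 𝒴 : Type*} [Fintype 𝒱] [Fintype 𝒳] [Fintype 𝒴]
    (r : 𝒱 × 𝒳 × 𝒴 → ℝ) : 𝒱 → ℝ :=
  fun v => ∑ x, ∑ y, r (v, x, y)

/-- `(V,X)`-marginal of a joint pmf on `𝒱 × 𝒳 × 𝒴`. -/
noncomputable def margVX {𝒱 𝒳 𝒴 : Type*} [Fintype 𝒱] [Fintype 𝒳] [Fintype 𝒴]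
    (r : 𝒱 × 𝒳 × 𝒴 → ℝ) : 𝒱 × 𝒳 → ℝ :=
  fun vx => ∑ y, r (vx.1, vx.2, y)

/-- `(V,Y)`-marginal of a joint pmf on `𝒱 × 𝒳 × 𝒴`. -/
noncomputable def margVY {𝒱 𝒳 𝒴 : Type*} [Fintype 𝒱] [Fintype 𝒳] [Fintype 𝒴]
    (r : 𝒱 × 𝒳 × 𝒴 → ℝ) : 𝒱 × 𝒴 → ℝ :=
  fun vy => ∑ x, r (vy.1, x, vy.2)

/-- The Markov chain `X − V − Y` under a joint pmf `r` on `𝒱 × 𝒳 × 𝒴`: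
`r(v,x,y) · r_V(v) = r_{VX}(v,x) · r_{VY}(v,y)` for all `(v,x,y)`. -/
def MarkovXVY {𝒱 𝒳 𝒴 : Type*} [Fintype 𝒱] [Fintype 𝒳] [Fintype 𝒴]
    (r : 𝒱 × 𝒳 × 𝒴 → ℝ) : Prop :=
  ∀ v x y, r (v, x, y) * margV3 r v = margVX r (v, x) * margVY r (v, y)

/-! ### Auxiliary lemmas -/

section Convexity

/-- The auxiliary function in the pointwise form of Pinsker's inequality. -/
noncomputable def gFun (u : ℝ) : ℝ := u * Real.log u - u + 1 - 3*(u-1)^2/(2*(u+2))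

/-- Its derivative. -/
noncomputable def gFun' (u : ℝ) : ℝ := Real.log u - 3*(u-1)*(u+5)/(2*(u+2)^2)

/-- Its second derivative. -/
noncomputable def gFun'' (u : ℝ) : ℝ := u⁻¹ - 27/(u+2)^3

lemma hasDerivAt_gFun {u : ℝ} (hu : 0 < u) : HasDerivAt gFun (gFun' u) u := by
  have h2 : (2*(u+2)) ≠ 0 := by positivity
  have hA : HasDerivAt (fun u : ℝ => u * Real.log u) (Real.log u + 1) u :=
    Real.hasDerivAt_mul_log (ne_of_gt hu)
  have hnum : HasDerivAt (fun u : ℝ => 3*(u-1)^2) (3*(2*(u-1))) u := by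
    have : HasDerivAt (fun u : ℝ => (u-1)^2) (2*(u-1)^1*1) u :=
      ((hasDerivAt_id u).sub_const 1).pow 2
    simpa using this.const_mul 3
  have hden : HasDerivAt (fun u : ℝ => 2*(u+2)) 2 u := by
    simpa using ((hasDerivAt_id u).add_const 2).const_mul 2
  have hQ : HasDerivAt (fun u : ℝ => 3*(u-1)^2/(2*(u+2)))
      ((3*(2*(u-1))*(2*(u+2)) - 3*(u-1)^2*2)/(2*(u+2))^2) u := hnum.div hden h2
  have h := ((hA.sub (hasDerivAt_id u)).add_const 1).sub hQ
  refine h.congr_deriv ?_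
  unfold gFun'
  field_simp
  ring

lemma hasDerivAt_gFun' {u : ℝ} (hu : 0 < u) : HasDerivAt gFun' (gFun'' u) u := by
  have h2 : (2*(u+2)^2) ≠ 0 := by positivity
  have hL : HasDerivAt Real.log u⁻¹ u := Real.hasDerivAt_log (ne_of_gt hu)
  have hnum : HasDerivAt (fun u : ℝ => 3*(u-1)*(u+5)) (3*1*(u+5) + 3*(u-1)*1) u :=
    (((hasDerivAt_id u).sub_const 1).const_mul 3).mul ((hasDerivAt_id u).add_const 5)
  have hden : HasDerivAt (fun u : ℝ => 2*(u+2)^2) (2*(2*(u+2)^1*1)) u :=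
    (((hasDerivAt_id u).add_const 2).pow 2).const_mul 2
  have hQ := hnum.div hden h2
  have h := hL.sub hQ
  refine h.congr_deriv ?_
  unfold gFun''
  have h3 : (u+2) ≠ 0 := by positivity
  field_simp
  ring

lemma gFun''_nonneg {u : ℝ} (hu : 0 < u) : 0 ≤ gFun'' u := by
  unfold gFun''
  rw [sub_nonneg, div_le_iff₀ (by positivity), inv_mul_eq_div, le_div_iff₀ hu]
  nlinarith [sq_nonneg (u-1), hu.le]

lemma gFun_nonneg {u : ℝ} (hu : 0 < u) : 0 ≤ gFun u := by
  have hmono' : MonotoneOn gFun' (Set.Ioi 0) := by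
    apply monotoneOn_of_deriv_nonneg (convex_Ioi 0)
    · exact fun x hx => (hasDerivAt_gFun' hx).differentiableAt.continuousAt.continuousWithinAt
    · rw [interior_Ioi]
      exact fun x hx => (hasDerivAt_gFun' hx).differentiableAt.differentiableWithinAt
    · rw [interior_Ioi]
      intro x hx
      rw [(hasDerivAt_gFun' hx).deriv]
      exact gFun''_nonneg hx
  have hg'1 : gFun' 1 = 0 := by unfold gFun'; norm_num
  have hg1 : gFun 1 = 0 := by unfold gFun; norm_num
  rcases le_or_gt 1 u with h1 | h1
  · have hmono : MonotoneOn gFun (Set.Ici 1) := by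
      apply monotoneOn_of_deriv_nonneg (convex_Ici 1)
      · exact fun x hx =>
          (hasDerivAt_gFun (lt_of_lt_of_le one_pos hx)).differentiableAt.continuousAt.continuousWithinAt
      · rw [interior_Ici]
        exact fun x hx => (hasDerivAt_gFun (lt_trans one_pos hx)).differentiableAt.differentiableWithinAt
      · rw [interior_Ici]
        intro x hx
        rw [(hasDerivAt_gFun (lt_trans one_pos hx)).deriv, ← hg'1]
        exact hmono' (Set.mem_Ioi.2 one_pos) (Set.mem_Ioi.2 (lt_trans one_pos hx)) hx.le
    calc (0:ℝ) = gFun 1 := hg1.symm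
    _ ≤ gFun u := hmono (Set.mem_Ici.2 le_rfl) (Set.mem_Ici.2 h1) h1
  · have hanti : AntitoneOn gFun (Set.Ioc 0 1) := by
      apply antitoneOn_of_deriv_nonpos (convex_Ioc 0 1)
      · exact fun x hx => (hasDerivAt_gFun hx.1).differentiableAt.continuousAt.continuousWithinAt
      · rw [interior_Ioc]
        exact fun x hx => (hasDerivAt_gFun hx.1).differentiableAt.differentiableWithinAt
      · rw [interior_Ioc]
        intro x hx
        rw [(hasDerivAt_gFun hx.1).deriv, ← hg'1]
        exact hmono' (Set.mem_Ioi.2 hx.1) (Set.mem_Ioi.2 one_pos) hx.2.le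
    calc (0:ℝ) = gFun 1 := hg1.symm
    _ ≤ gFun u := hanti (Set.mem_Ioc.2 ⟨hu, h1.le⟩) (Set.mem_Ioc.2 ⟨one_pos, le_refl 1⟩) h1.le

/-- Pointwise form of Pinsker's inequality. -/
lemma kl_point {x y : ℝ} (hx : 0 < x) (hy : 0 < y) :
    3*(x-y)^2/(2*(x+2*y)) ≤ x * Real.log (x/y) - x + y := by
  have h := gFun_nonneg (div_pos hx hy)
  unfold gFun at h
  have hxy : x/y * Real.log (x/y) - x/y + 1 - 3*(x/y-1)^2/(2*(x/y+2)) =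
      (x * Real.log (x/y) - x + y - 3*(x-y)^2/(2*(x+2*y))) / y := by
    field_simp
  rw [hxy] at h
  rcases div_nonneg_iff.1 h with ⟨h1,_⟩ | ⟨_,h2⟩
  · linarith
  · linarith

end Convexity

/-- Pinsker's inequality for positive pmfs on a finite set (base-2 divergence). -/
lemma pinsker_finite {β : Type*} [Fintype β] (a b : β → ℝ)
    (ha1 : ∑ z, a z = 1) (hb1 : ∑ z, b z = 1)
    (hapos : ∀ z, 0 < a z) (hbpos : ∀ z, 0 < b z) :
    0 ≤ ∑ z, a z * Real.logb 2 (a z / b z) ∧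
    ∑ z, |a z - b z| ≤ Real.sqrt (2 * Real.log 2 * ∑ z, a z * Real.logb 2 (a z / b z)) := by
  have hl2 : (0:ℝ) < Real.log 2 := Real.log_pos one_lt_two
  have hw : ∀ z, (0:ℝ) < a z + 2 * b z := fun z => by
    have := hapos z; have := hbpos z; positivity
  set D := ∑ z, a z * Real.logb 2 (a z / b z) with hD
  have hDe : ∑ z, (a z * Real.log (a z / b z) - a z + b z) = Real.log 2 * D := by
    have hterm : ∀ z, a z * Real.log (a z / b z) - a z + b z
        = Real.log 2 * (a z * Real.logb 2 (a z / b z)) + (b z - a z) := by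
      intro z
      rw [Real.logb]
      field_simp
      ring
    rw [Finset.sum_congr rfl fun z _ => hterm z, Finset.sum_add_distrib,
      Finset.sum_sub_distrib, ha1, hb1, ← Finset.mul_sum, ← hD]
    ring
  have hkey : ∑ z, 3*(a z - b z)^2/(2*(a z + 2 * b z)) ≤ Real.log 2 * D := by
    rw [← hDe]
    exact Finset.sum_le_sum fun z _ => kl_point (hapos z) (hbpos z)
  have hkey0 : (0:ℝ) ≤ Real.log 2 * D := by
    refine le_trans (Finset.sum_nonneg fun z _ => ?_) hkey
    have := hw z; positivity
  have hDpos : 0 ≤ D := by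
    by_contra h
    push_neg at h
    nlinarith
  refine ⟨hDpos, ?_⟩
  have hCS := Finset.sum_mul_sq_le_sq_mul_sq Finset.univ
      (fun z => |a z - b z| / Real.sqrt (a z + 2 * b z)) (fun z => Real.sqrt (a z + 2 * b z))
  have h1 : ∀ z : β, |a z - b z| / Real.sqrt (a z + 2 * b z) * Real.sqrt (a z + 2 * b z)
      = |a z - b z| := fun z => div_mul_cancel₀ _ (Real.sqrt_pos.2 (hw z)).ne'
  have h2 : ∀ z : β, (|a z - b z| / Real.sqrt (a z + 2 * b z))^2 = (a z - b z)^2/(a z + 2*b z) := by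
    intro z
    rw [div_pow, sq_abs, Real.sq_sqrt (hw z).le]
  have h3 : ∑ z, (Real.sqrt (a z + 2 * b z))^2 = 3 := by
    have h3' : ∀ z : β, (Real.sqrt (a z + 2 * b z))^2 = a z + 2 * b z :=
      fun z => Real.sq_sqrt (hw z).le
    rw [Finset.sum_congr rfl fun z _ => h3' z, Finset.sum_add_distrib, ha1, ← Finset.mul_sum, hb1]
    norm_num
  simp only [h1] at hCS
  rw [Finset.sum_congr rfl fun z _ => h2 z, h3] at hCS
  have h4 : ∑ z, (a z - b z)^2/(a z + 2 * b z) ≤ 2/3 * (Real.log 2 * D) := by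
    have he : ∀ z : β, (a z - b z)^2/(a z + 2 * b z)
        = 2/3 * (3*(a z - b z)^2/(2*(a z + 2 * b z))) := by
      intro z
      have := (hw z).ne'
      field_simp
    rw [Finset.sum_congr rfl fun z _ => he z, ← Finset.mul_sum]
    nlinarith
  have h5 : (∑ z, |a z - b z|)^2 ≤ 2 * Real.log 2 * D := by nlinarith
  calc ∑ z, |a z - b z| = Real.sqrt ((∑ z, |a z - b z|)^2) :=
        (Real.sqrt_sq (Finset.sum_nonneg fun z _ => abs_nonneg _)).symm
    _ ≤ Real.sqrt (2 * Real.log 2 * D) := Real.sqrt_le_sqrt h5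

/-- Pointwise bound for the divergence by the minimum of `q`. -/
lemma point_logb_bound {μ p q : ℝ} (hμ0 : 0 < μ) (hμ2 : μ ≤ 1/2)
    (hqμ : μ ≤ q) (hp0 : 0 ≤ p) (hp1 : p ≤ 1) :
    p * Real.logb 2 (p / q) ≤ Real.logb 2 μ⁻¹ * (p - q) + Real.logb 2 μ⁻¹ * |p - q| := by
  have hq0 : 0 < q := lt_of_lt_of_le hμ0 hqμ
  have hμ1 : μ < 1 := lt_of_le_of_lt hμ2 (by norm_num)
  have hC1 : (1:ℝ) ≤ Real.logb 2 μ⁻¹ := by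
    have h2 : (2:ℝ) ≤ μ⁻¹ := by
      rw [show (2:ℝ) = ((1:ℝ)/2)⁻¹ by norm_num]
      exact inv_anti₀ hμ0 hμ2
    calc (1:ℝ) = Real.logb 2 2 := (Real.logb_self_eq_one one_lt_two).symm
      _ ≤ Real.logb 2 μ⁻¹ := (Real.logb_le_logb one_lt_two (by norm_num) (by positivity)).2 h2
  have hC0 : (0:ℝ) < Real.logb 2 μ⁻¹ := lt_of_lt_of_le one_pos hC1
  rcases le_or_gt p q with hpq | hpq
  · have h1 : p * Real.logb 2 (p / q) ≤ 0 := by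
      apply mul_nonpos_of_nonneg_of_nonpos hp0
      exact Real.logb_nonpos one_lt_two (by positivity) (div_le_one_of_le₀ hpq hq0.le)
    have h2 : |p - q| = -(p - q) := abs_of_nonpos (by linarith)
    rw [h2]
    linarith
  · have hp0' : 0 < p := lt_trans hq0 hpq
    set t := q / p with ht
    have ht1 : t < 1 := (div_lt_one hp0').2 hpq
    have htμ : μ ≤ t := by
      calc μ ≤ q := hqμ
        _ ≤ q / p := by
          rw [le_div_iff₀ hp0']
          nlinarith
    have ht0 : 0 < t := by positivity
    set a := (1 - t) / (1 - μ) with ha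
    have hd : (0:ℝ) < 1 - μ := by linarith
    have ha0 : 0 ≤ a := by
      apply div_nonneg <;> linarith
    have ha1 : a ≤ 1 := by
      rw [div_le_one hd]; linarith
    have hgeom : μ ^ a * 1 ^ (1 - a) ≤ a * μ + (1 - a) * 1 :=
      Real.geom_mean_le_arith_mean2_weighted ha0 (by linarith) hμ0.le zero_le_one (by ring)
    have hsum : a * μ + (1 - a) * 1 = t := by
      rw [ha]
      field_simp
      ring
    have hμa : μ ^ a ≤ t := by
      rw [hsum] at hgeom
      simpa using hgeom
    have hlog : a * Real.log μ ≤ Real.log t := by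
      rw [← Real.log_rpow hμ0]
      exact Real.log_le_log (by positivity) hμa
    have hloginv : Real.log (p / q) = - Real.log t := by
      rw [ht, ← Real.log_inv, inv_div]
    have hlogμpos : 0 < Real.log μ⁻¹ := Real.log_pos ((one_lt_inv₀ hμ0).2 hμ1)
    have hstep : Real.log (p / q) ≤ 2 * (1 - t) * Real.log μ⁻¹ := by
      rw [hloginv]
      have h1 : -Real.log t ≤ a * Real.log μ⁻¹ := by
        rw [Real.log_inv]
        nlinarith
      have h2 : a ≤ 2 * (1 - t) := by
        rw [ha, div_le_iff₀ hd]
        nlinarith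
      nlinarith
    have hpt : p * (1 - t) = p - q := by
      rw [ht]
      field_simp
    have habs : |p - q| = p - q := abs_of_pos (by linarith)
    have hl2 : (0:ℝ) < Real.log 2 := Real.log_pos one_lt_two
    have h3 : p * Real.log (p/q) ≤ 2*(p - q)*Real.log μ⁻¹ := by
      have := mul_le_mul_of_nonneg_left hstep hp0
      nlinarith
    rw [habs, Real.logb, Real.logb]
    calc p * (Real.log (p/q) / Real.log 2) = (p * Real.log (p/q)) / Real.log 2 := by ring
      _ ≤ (2*(p - q)*Real.log μ⁻¹) / Real.log 2 := by gcongr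
      _ = Real.log μ⁻¹ / Real.log 2 * (p - q) + Real.log μ⁻¹ / Real.log 2 * (p - q) := by ring

/-- Summed form of the `log₂(1/μ)` bound. -/
lemma sum_logb_le {β : Type*} [Fintype β] {μ : ℝ} (hμ0 : 0 < μ) (hμ2 : μ ≤ 1/2)
    (p q : β → ℝ) (hp0 : ∀ z, 0 ≤ p z) (hp1 : ∑ z, p z = 1) (hq1 : ∑ z, q z = 1)
    (hqμ : ∀ z, μ ≤ q z) :
    ∑ z, p z * Real.logb 2 (p z / q z) ≤ Real.logb 2 μ⁻¹ * ∑ z, |p z - q z| := by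
  have hple : ∀ z, p z ≤ 1 := fun z => by
    rw [← hp1]
    exact Finset.single_le_sum (fun i _ => hp0 i) (Finset.mem_univ z)
  calc ∑ z, p z * Real.logb 2 (p z / q z)
      ≤ ∑ z, (Real.logb 2 μ⁻¹ * (p z - q z) + Real.logb 2 μ⁻¹ * |p z - q z|) :=
        Finset.sum_le_sum fun z _ => point_logb_bound hμ0 hμ2 (hqμ z) (hp0 z) (hple z)
    _ = Real.logb 2 μ⁻¹ * ∑ z, |p z - q z| := by
        rw [Finset.sum_add_distrib, ← Finset.mul_sum, ← Finset.mul_sum,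
          Finset.sum_sub_distrib, hp1, hq1]
        ring

/-- Abstract pointwise decomposition for the Markov chain `ℓ¹` bound. -/
lemma markov_point_abs (a b c d e f g h : ℝ) (hc : 0 < c) (hf : 0 < f)
    (he : 0 ≤ e) (hg : 0 ≤ g)
    (h1 : a * c = d * e) (h2 : b * f = g * h) :
    |a - b| ≤ (e/c) * |d - g| + (g/f) * |e - h| + (g/f) * (e/c) * |c - f| := by
  have hid : a - b = (e/c) * (d - g) + (g/f) * (e - h) + (g/f) * (e/c) * (f - c) := by
    field_simp
    linear_combination f * h1 - c * h2
  rw [hid]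
  refine (abs_add_three _ _ _).trans ?_
  rw [abs_mul, abs_mul, abs_mul, abs_mul, abs_of_nonneg (div_nonneg he hc.le),
    abs_of_nonneg (div_nonneg hg hf.le), abs_sub_comm f c]

section MarkovL1
variable {𝒱 𝒳 𝒴 : Type*} [Fintype 𝒱] [Fintype 𝒳] [Fintype 𝒴]
    [Nonempty 𝒱] [Nonempty 𝒳] [Nonempty 𝒴]

omit [Nonempty 𝒱] [Nonempty 𝒳] [Nonempty 𝒴] in
lemma sum_margVY_eq (r : 𝒱 × 𝒳 × 𝒴 → ℝ) (v : 𝒱) : ∑ y, margVY r (v, y) = margV3 r v := by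
  unfold margVY margV3
  exact Finset.sum_comm

omit [Nonempty 𝒱] [Nonempty 𝒳] [Nonempty 𝒴] in
lemma sum_margVX_eq (r : 𝒱 × 𝒳 × 𝒴 → ℝ) (v : 𝒱) : ∑ x, margVX r (v, x) = margV3 r v := rfl

omit [Nonempty 𝒱] [Nonempty 𝒳] [Nonempty 𝒴] in
lemma sum_triple (r : 𝒱 × 𝒳 × 𝒴 → ℝ) :
    ∑ z : 𝒱 × 𝒳 × 𝒴, r z = ∑ v, ∑ x, ∑ y, r (v, x, y) := by
  rw [Fintype.sum_prod_type]
  exact Finset.sum_congr rfl fun v _ => Fintype.sum_prod_type _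

omit [Nonempty 𝒱] [Nonempty 𝒳] [Nonempty 𝒴] in
lemma sum_margV3_total (r : 𝒱 × 𝒳 × 𝒴 → ℝ) : ∑ v, margV3 r v = ∑ z, r z := by
  rw [sum_triple]
  rfl

omit [Nonempty 𝒱] [Nonempty 𝒳] [Nonempty 𝒴] in
lemma sum_margVX_total (r : 𝒱 × 𝒳 × 𝒴 → ℝ) : ∑ vx : 𝒱 × 𝒳, margVX r vx = ∑ z, r z := by
  rw [sum_triple]
  exact Fintype.sum_prod_type _

omit [Nonempty 𝒱] [Nonempty 𝒳] [Nonempty 𝒴] in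
lemma sum_margVY_total (r : 𝒱 × 𝒳 × 𝒴 → ℝ) : ∑ vy : 𝒱 × 𝒴, margVY r vy = ∑ z, r z := by
  rw [sum_triple]
  rw [Fintype.sum_prod_type (f := fun vy : 𝒱 × 𝒴 => margVY r vy)]
  refine Finset.sum_congr rfl fun v _ => ?_
  exact Finset.sum_comm

omit [Nonempty 𝒱] in
lemma l1_markov (p q : 𝒱 × 𝒳 × 𝒴 → ℝ) (hp0 : ∀ z, 0 ≤ p z) (hqpos : ∀ z, 0 < q z)
    (hpM : MarkovXVY p) (hqM : MarkovXVY q) :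
    ∑ z, |p z - q z| ≤ (∑ vx, |margVX p vx - margVX q vx|)
      + (∑ v, |margV3 p v - margV3 q v|) + (∑ vy, |margVY p vy - margVY q vy|) := by
  have hL : ∑ z : 𝒱 × 𝒳 × 𝒴, |p z - q z| = ∑ v, ∑ x, ∑ y, |p (v,x,y) - q (v,x,y)| :=
    sum_triple _
  have hR1 : ∑ vx : 𝒱 × 𝒳, |margVX p vx - margVX q vx|
      = ∑ v, ∑ x, |margVX p (v,x) - margVX q (v,x)| := Fintype.sum_prod_type _
  have hR2 : ∑ vy : 𝒱 × 𝒴, |margVY p vy - margVY q vy|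
      = ∑ v, ∑ y, |margVY p (v,y) - margVY q (v,y)| := Fintype.sum_prod_type _
  rw [hL, hR1, hR2, ← Finset.sum_add_distrib, ← Finset.sum_add_distrib]
  refine Finset.sum_le_sum fun v _ => ?_
  have hqV : 0 < margV3 q v :=
    Finset.sum_pos (fun x _ => Finset.sum_pos (fun y _ => hqpos _) Finset.univ_nonempty)
      Finset.univ_nonempty
  have hpV0 : 0 ≤ margV3 p v := Finset.sum_nonneg fun x _ => Finset.sum_nonneg fun y _ => hp0 _
  have hVXq : ∀ x, 0 < margVX q (v, x) := fun x =>
    Finset.sum_pos (fun y _ => hqpos _) Finset.univ_nonempty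
  have hVYq : ∀ y, 0 < margVY q (v, y) := fun y =>
    Finset.sum_pos (fun x _ => hqpos _) Finset.univ_nonempty
  have hVYp : ∀ y, 0 ≤ margVY p (v, y) := fun y => Finset.sum_nonneg fun x _ => hp0 _
  have hVXqn : ∀ x, 0 ≤ margVX q (v, x) := fun x => (hVXq x).le
  rcases eq_or_lt_of_le hpV0 with hpV | hpV
  · have hz : ∀ x y, p (v,x,y) = 0 := by
      intro x y
      have h1 := (Finset.sum_eq_zero_iff_of_nonneg
        (fun x _ => Finset.sum_nonneg fun y _ => hp0 (v,x,y))).1 hpV.symm x (Finset.mem_univ x)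
      exact (Finset.sum_eq_zero_iff_of_nonneg (fun y _ => hp0 (v,x,y))).1 h1 y (Finset.mem_univ y)
    have hVX0 : ∀ x, margVX p (v,x) = 0 := fun x => Finset.sum_eq_zero fun y _ => hz x y
    have hVY0 : ∀ y, margVY p (v,y) = 0 := fun y => Finset.sum_eq_zero fun x _ => hz x y
    have hLv : ∑ x, ∑ y, |p (v,x,y) - q (v,x,y)| = margV3 q v := by
      unfold margV3
      refine Finset.sum_congr rfl fun x _ => Finset.sum_congr rfl fun y _ => ?_
      rw [hz x y, zero_sub, abs_neg]
      exact abs_of_pos (hqpos _)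
    have hA : ∑ x, |margVX p (v,x) - margVX q (v,x)| = margV3 q v := by
      rw [← sum_margVX_eq q v]
      refine Finset.sum_congr rfl fun x _ => ?_
      rw [hVX0 x, zero_sub, abs_neg]
      exact abs_of_pos (hVXq x)
    have hB : ∑ y, |margVY p (v,y) - margVY q (v,y)| = margV3 q v := by
      rw [← sum_margVY_eq q v]
      refine Finset.sum_congr rfl fun y _ => ?_
      rw [hVY0 y, zero_sub, abs_neg]
      exact abs_of_pos (hVYq y)
    have hDV : |margV3 p v - margV3 q v| = margV3 q v := by
      rw [← hpV, zero_sub, abs_neg]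
      exact abs_of_pos hqV
    rw [hLv, hA, hB, hDV]
    linarith
  · have habs : ∀ x y, |p (v,x,y) - q (v,x,y)|
        ≤ (margVY p (v,y)/margV3 p v) * |margVX p (v,x) - margVX q (v,x)|
        + (margVX q (v,x)/margV3 q v) * |margVY p (v,y) - margVY q (v,y)|
        + (margVX q (v,x)/margV3 q v) * (margVY p (v,y)/margV3 p v)
          * |margV3 p v - margV3 q v| :=
      fun x y => markov_point_abs _ _ _ _ _ _ _ _ hpV hqV (hVYp y) (hVXqn x)
        (hpM v x y) (hqM v x y)
    have e1 : ∑ x, ∑ y, (margVY p (v,y)/margV3 p v) * |margVX p (v,x) - margVX q (v,x)|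
        = ∑ x, |margVX p (v,x) - margVX q (v,x)| := by
      refine Finset.sum_congr rfl fun x _ => ?_
      rw [← Finset.sum_mul, ← Finset.sum_div, sum_margVY_eq, div_self hpV.ne', one_mul]
    have e2 : ∑ x, ∑ y, (margVX q (v,x)/margV3 q v) * |margVY p (v,y) - margVY q (v,y)|
        = ∑ y, |margVY p (v,y) - margVY q (v,y)| := by
      have h' : ∀ x, ∑ y, (margVX q (v,x)/margV3 q v) * |margVY p (v,y) - margVY q (v,y)|
          = (margVX q (v,x)/margV3 q v) * ∑ y, |margVY p (v,y) - margVY q (v,y)| :=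
        fun x => (Finset.mul_sum _ _ _).symm
      rw [Finset.sum_congr rfl fun x _ => h' x, ← Finset.sum_mul, ← Finset.sum_div,
        sum_margVX_eq, div_self hqV.ne', one_mul]
    have e3 : ∑ x, ∑ y, (margVX q (v,x)/margV3 q v) * (margVY p (v,y)/margV3 p v)
          * |margV3 p v - margV3 q v|
        = |margV3 p v - margV3 q v| := by
      have h' : ∀ x, ∑ y, (margVX q (v,x)/margV3 q v) * (margVY p (v,y)/margV3 p v)
            * |margV3 p v - margV3 q v|
          = (margVX q (v,x)/margV3 q v) * |margV3 p v - margV3 q v| := by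
        intro x
        have hc : ∀ y:𝒴, (margVX q (v,x)/margV3 q v) * (margVY p (v,y)/margV3 p v)
            * |margV3 p v - margV3 q v| = ((margVX q (v,x)/margV3 q v)
            * |margV3 p v - margV3 q v|) * (margVY p (v,y)/margV3 p v) := fun y => by ring
        rw [Finset.sum_congr rfl fun y _ => hc y, ← Finset.mul_sum, ← Finset.sum_div,
          sum_margVY_eq, div_self hpV.ne', mul_one]
      rw [Finset.sum_congr rfl fun x _ => h' x, ← Finset.sum_mul, ← Finset.sum_div,
        sum_margVX_eq, div_self hqV.ne', one_mul]
    calc ∑ x, ∑ y, |p (v,x,y) - q (v,x,y)|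
        ≤ ∑ x, ∑ y, ((margVY p (v,y)/margV3 p v) * |margVX p (v,x) - margVX q (v,x)|
          + (margVX q (v,x)/margV3 q v) * |margVY p (v,y) - margVY q (v,y)|
          + (margVX q (v,x)/margV3 q v) * (margVY p (v,y)/margV3 p v)
            * |margV3 p v - margV3 q v|) :=
          Finset.sum_le_sum fun x _ => Finset.sum_le_sum fun y _ => habs x y
      _ = (∑ x, ∑ y, (margVY p (v,y)/margV3 p v) * |margVX p (v,x) - margVX q (v,x)|)
          + (∑ x, ∑ y, (margVX q (v,x)/margV3 q v) * |margVY p (v,y) - margVY q (v,y)|)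
          + (∑ x, ∑ y, (margVX q (v,x)/margV3 q v) * (margVY p (v,y)/margV3 p v)
            * |margV3 p v - margV3 q v|) := by
          simp only [Finset.sum_add_distrib]
      _ = (∑ x, |margVX p (v,x) - margVX q (v,x)|) + (∑ y, |margVY p (v,y) - margVY q (v,y)|)
          + |margV3 p v - margV3 q v| := by rw [e1, e2, e3]
      _ ≤ _ := by linarith

end MarkovL1

/-- Abstract single-letter form of the first chain of inequalities, Eq. (2), in
the proof of Lemma 9: for pmfs `p, q` on `𝒱 × 𝒳 × 𝒴` with `q > 0`, both
satisfying the Markov chain `X − V − Y`,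
`D(p‖q) ≤ log₂(1/μ_q)·√(2 ln 2)·[√(D(q_{VX}‖p_{VX})) + √(D(q_V‖p_V)) + √(D(q_{VY}‖p_{VY}))]`. -/
theorem klDiv_markov_decomposition
    {𝒱 𝒳 𝒴 : Type*} [Fintype 𝒱] [Fintype 𝒳] [Fintype 𝒴]
    [Nonempty 𝒱] [Nonempty 𝒳] [Nonempty 𝒴]
    (p q : 𝒱 × 𝒳 × 𝒴 → ℝ) (hp : IsPMF p) (hq : IsPMF q)
    (hqpos : ∀ z, 0 < q z) (hpM : MarkovXVY p) (hqM : MarkovXVY q) :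
    klDiv p q ≤
      ENNReal.ofReal
          (Real.logb 2 ((Finset.univ.inf' Finset.univ_nonempty q)⁻¹) *
            Real.sqrt (2 * Real.log 2)) *
        ((klDiv (margVX q) (margVX p)) ^ (1 / 2 : ℝ) +
          (klDiv (margV3 q) (margV3 p)) ^ (1 / 2 : ℝ) +
          (klDiv (margVY q) (margVY p)) ^ (1 / 2 : ℝ)) := by
  obtain ⟨hp0, hp1⟩ := hp
  obtain ⟨hq0, hq1⟩ := hq
  set μ := Finset.univ.inf' Finset.univ_nonempty q with hμdef
  have hμ0 : 0 < μ := (Finset.lt_inf'_iff _).2 fun z _ => hqpos z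
  have hμq : ∀ z, μ ≤ q z := fun z => Finset.inf'_le q (Finset.mem_univ z)
  have hqcond : ∀ z, q z = 0 → p z = 0 := fun z h => absurd h (hqpos z).ne'
  have hLHS : klDiv p q = ENNReal.ofReal (∑ z, p z * Real.logb 2 (p z / q z)) :=
    if_pos hqcond
  by_cases hμ2 : μ ≤ 1/2
  swap
  · -- μ > 1/2 : the space is a single point and the LHS vanishes
    push_neg at hμ2
    have hsub : ∀ z z' : 𝒱 × 𝒳 × 𝒴, z = z' := by
      intro z z'
      by_contra hne
      have hss : ({z, z'} : Finset (𝒱 × 𝒳 × 𝒴)) ⊆ Finset.univ := Finset.subset_univ _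
      have hsum2 : q z + q z' ≤ ∑ w, q w := by
        rw [← Finset.sum_pair hne]
        exact Finset.sum_le_sum_of_subset_of_nonneg hss fun w _ _ => (hqpos w).le
      have := hμq z
      have := hμq z'
      rw [hq1] at hsum2
      linarith
    have hz0 : ∀ z : 𝒱 × 𝒳 × 𝒴, p z = 1 := by
      intro z
      have : ∑ w, p w = p z := by
        refine (Finset.sum_eq_single_of_mem z (Finset.mem_univ z) ?_)
        intro w _ hw
        exact absurd (hsub w z) hw
      rw [← this, hp1]
    have hzq : ∀ z : 𝒱 × 𝒳 × 𝒴, q z = 1 := by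
      intro z
      have : ∑ w, q w = q z := by
        refine (Finset.sum_eq_single_of_mem z (Finset.mem_univ z) ?_)
        intro w _ hw
        exact absurd (hsub w z) hw
      rw [← this, hq1]
    have hS0 : ∑ z, p z * Real.logb 2 (p z / q z) = 0 := by
      refine Finset.sum_eq_zero fun z _ => ?_
      rw [hz0 z, hzq z]
      norm_num
    rw [hLHS, hS0, ENNReal.ofReal_zero]
    exact zero_le
  · -- main case: μ ≤ 1/2
    have hC1 : (1:ℝ) ≤ Real.logb 2 μ⁻¹ := by
      have h2 : (2:ℝ) ≤ μ⁻¹ := by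
        rw [show (2:ℝ) = ((1:ℝ)/2)⁻¹ by norm_num]
        exact inv_anti₀ hμ0 hμ2
      calc (1:ℝ) = Real.logb 2 2 := (Real.logb_self_eq_one one_lt_two).symm
        _ ≤ Real.logb 2 μ⁻¹ := (Real.logb_le_logb one_lt_two (by norm_num) (by positivity)).2 h2
    have hC0 : (0:ℝ) < Real.logb 2 μ⁻¹ := lt_of_lt_of_le one_pos hC1
    have hsqrt0 : (0:ℝ) < Real.sqrt (2 * Real.log 2) :=
      Real.sqrt_pos.2 (by positivity)
    have hK0 : (0:ℝ) < Real.logb 2 μ⁻¹ * Real.sqrt (2 * Real.log 2) := mul_pos hC0 hsqrt0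
    have hKne : ENNReal.ofReal (Real.logb 2 μ⁻¹ * Real.sqrt (2 * Real.log 2)) ≠ 0 :=
      (ENNReal.ofReal_pos.2 hK0).ne'
    -- positivity of the q-marginals
    have hqVXpos : ∀ vx, 0 < margVX q vx := fun vx =>
      Finset.sum_pos (fun y _ => hqpos _) Finset.univ_nonempty
    have hqV3pos : ∀ v, 0 < margV3 q v := fun v =>
      Finset.sum_pos (fun x _ => Finset.sum_pos (fun y _ => hqpos _) Finset.univ_nonempty)
        Finset.univ_nonempty
    have hqVYpos : ∀ vy, 0 < margVY q vy := fun vy =>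
      Finset.sum_pos (fun x _ => hqpos _) Finset.univ_nonempty
    by_cases hcond1 : ∀ vx, margVX p vx = 0 → margVX q vx = 0
    swap
    · have htop : klDiv (margVX q) (margVX p) = ⊤ := if_neg (by
        intro h
        exact hcond1 fun vx h0 => h vx h0)
      rw [htop, ENNReal.top_rpow_of_pos (by norm_num : (0:ℝ) < 1/2)]
      rw [top_add, top_add, ENNReal.mul_top hKne]
      exact le_top
    by_cases hcond2 : ∀ v, margV3 p v = 0 → margV3 q v = 0
    swap
    · have htop : klDiv (margV3 q) (margV3 p) = ⊤ := if_neg (by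
        intro h
        exact hcond2 fun v h0 => h v h0)
      rw [htop, ENNReal.top_rpow_of_pos (by norm_num : (0:ℝ) < 1/2)]
      rw [add_top, top_add, ENNReal.mul_top hKne]
      exact le_top
    by_cases hcond3 : ∀ vy, margVY p vy = 0 → margVY q vy = 0
    swap
    · have htop : klDiv (margVY q) (margVY p) = ⊤ := if_neg (by
        intro h
        exact hcond3 fun vy h0 => h vy h0)
      rw [htop, ENNReal.top_rpow_of_pos (by norm_num : (0:ℝ) < 1/2)]
      rw [add_top, ENNReal.mul_top hKne]
      exact le_top
    -- all marginal divergences are finite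
    have hpVXpos : ∀ vx, 0 < margVX p vx := by
      intro vx
      rcases eq_or_lt_of_le (Finset.sum_nonneg fun y _ => hp0 (vx.1, vx.2, y)) with h | h
      · exact absurd (hcond1 vx h.symm) (hqVXpos vx).ne'
      · exact h
    have hpV3pos : ∀ v, 0 < margV3 p v := by
      intro v
      rcases eq_or_lt_of_le (Finset.sum_nonneg fun x _ => Finset.sum_nonneg fun y _ =>
        hp0 (v, x, y)) with h | h
      · exact absurd (hcond2 v h.symm) (hqV3pos v).ne'
      · exact h
    have hpVYpos : ∀ vy, 0 < margVY p vy := by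
      intro vy
      rcases eq_or_lt_of_le (Finset.sum_nonneg fun x _ => hp0 (vy.1, x, vy.2)) with h | h
      · exact absurd (hcond3 vy h.symm) (hqVYpos vy).ne'
      · exact h
    -- pmf sums of marginals
    have hqVX1 : ∑ vx, margVX q vx = 1 := by rw [sum_margVX_total, hq1]
    have hpVX1 : ∑ vx, margVX p vx = 1 := by rw [sum_margVX_total, hp1]
    have hqV31 : ∑ v, margV3 q v = 1 := by rw [sum_margV3_total, hq1]
    have hpV31 : ∑ v, margV3 p v = 1 := by rw [sum_margV3_total, hp1]
    have hqVY1 : ∑ vy, margVY q vy = 1 := by rw [sum_margVY_total, hq1]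
    have hpVY1 : ∑ vy, margVY p vy = 1 := by rw [sum_margVY_total, hp1]
    -- Pinsker for the three marginals
    obtain ⟨hD1n, hT1⟩ := pinsker_finite (margVX q) (margVX p) hqVX1 hpVX1 hqVXpos hpVXpos
    obtain ⟨hD2n, hT2⟩ := pinsker_finite (margV3 q) (margV3 p) hqV31 hpV31 hqV3pos hpV3pos
    obtain ⟨hD3n, hT3⟩ := pinsker_finite (margVY q) (margVY p) hqVY1 hpVY1 hqVYpos hpVYpos
    set D1 := ∑ vx, margVX q vx * Real.logb 2 (margVX q vx / margVX p vx) with hD1def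
    set D2 := ∑ v, margV3 q v * Real.logb 2 (margV3 q v / margV3 p v) with hD2def
    set D3 := ∑ vy, margVY q vy * Real.logb 2 (margVY q vy / margVY p vy) with hD3def
    -- rewrite RHS klDiv's
    have hK1 : klDiv (margVX q) (margVX p) ^ (1/2 : ℝ) = ENNReal.ofReal (Real.sqrt D1) := by
      rw [show klDiv (margVX q) (margVX p) = ENNReal.ofReal D1 from if_pos hcond1,
        ENNReal.ofReal_rpow_of_nonneg hD1n (by norm_num), Real.sqrt_eq_rpow]
    have hK2 : klDiv (margV3 q) (margV3 p) ^ (1/2 : ℝ) = ENNReal.ofReal (Real.sqrt D2) := by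
      rw [show klDiv (margV3 q) (margV3 p) = ENNReal.ofReal D2 from if_pos hcond2,
        ENNReal.ofReal_rpow_of_nonneg hD2n (by norm_num), Real.sqrt_eq_rpow]
    have hK3 : klDiv (margVY q) (margVY p) ^ (1/2 : ℝ) = ENNReal.ofReal (Real.sqrt D3) := by
      rw [show klDiv (margVY q) (margVY p) = ENNReal.ofReal D3 from if_pos hcond3,
        ENNReal.ofReal_rpow_of_nonneg hD3n (by norm_num), Real.sqrt_eq_rpow]
    rw [hLHS, hK1, hK2, hK3, ← ENNReal.ofReal_add (Real.sqrt_nonneg _) (Real.sqrt_nonneg _),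
      ← ENNReal.ofReal_add (by positivity) (Real.sqrt_nonneg _),
      ← ENNReal.ofReal_mul hK0.le]
    apply ENNReal.ofReal_le_ofReal
    -- the real inequality
    have step1 : ∑ z, p z * Real.logb 2 (p z / q z)
        ≤ Real.logb 2 μ⁻¹ * ∑ z, |p z - q z| :=
      sum_logb_le hμ0 hμ2 p q hp0 hp1 hq1 hμq
    have step2 : ∑ z, |p z - q z| ≤ (∑ vx, |margVX p vx - margVX q vx|)
        + (∑ v, |margV3 p v - margV3 q v|) + (∑ vy, |margVY p vy - margVY q vy|) :=
      l1_markov p q hp0 hqpos hpM hqM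
    have hT1' : ∑ vx, |margVX p vx - margVX q vx| ≤ Real.sqrt (2 * Real.log 2 * D1) := by
      rw [Finset.sum_congr rfl fun vx _ => abs_sub_comm (margVX p vx) (margVX q vx)]
      exact hT1
    have hT2' : ∑ v, |margV3 p v - margV3 q v| ≤ Real.sqrt (2 * Real.log 2 * D2) := by
      rw [Finset.sum_congr rfl fun v _ => abs_sub_comm (margV3 p v) (margV3 q v)]
      exact hT2
    have hT3' : ∑ vy, |margVY p vy - margVY q vy| ≤ Real.sqrt (2 * Real.log 2 * D3) := by
      rw [Finset.sum_congr rfl fun vy _ => abs_sub_comm (margVY p vy) (margVY q vy)]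
      exact hT3
    have hs1 : Real.sqrt (2 * Real.log 2 * D1)
        = Real.sqrt (2 * Real.log 2) * Real.sqrt D1 := Real.sqrt_mul (by positivity) _
    have hs2 : Real.sqrt (2 * Real.log 2 * D2)
        = Real.sqrt (2 * Real.log 2) * Real.sqrt D2 := Real.sqrt_mul (by positivity) _
    have hs3 : Real.sqrt (2 * Real.log 2 * D3)
        = Real.sqrt (2 * Real.log 2) * Real.sqrt D3 := Real.sqrt_mul (by positivity) _
    calc ∑ z, p z * Real.logb 2 (p z / q z)
        ≤ Real.logb 2 μ⁻¹ * ∑ z, |p z - q z| := step1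
      _ ≤ Real.logb 2 μ⁻¹ * ((∑ vx, |margVX p vx - margVX q vx|)
          + (∑ v, |margV3 p v - margV3 q v|) + (∑ vy, |margVY p vy - margVY q vy|)) :=
          mul_le_mul_of_nonneg_left step2 hC0.le
      _ ≤ Real.logb 2 μ⁻¹ * (Real.sqrt (2 * Real.log 2 * D1)
          + Real.sqrt (2 * Real.log 2 * D2) + Real.sqrt (2 * Real.log 2 * D3)) := by
          apply mul_le_mul_of_nonneg_left _ hC0.le
          linarith
      _ = Real.logb 2 μ⁻¹ * Real.sqrt (2 * Real.log 2)
          * (Real.sqrt D1 + Real.sqrt D2 + Real.sqrt D3) := by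
          rw [hs1, hs2, hs3]
          ring
end
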